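/- arXiv:2112.14674 — 5 statements merged into one kernel-verified Lean document; each statement's English description precedes it below -/
import Mathlib

section
/- Let X = (X^1,...,X^p) ∈ {−1,1}^p, p ≥ 3, follow a symmetric Ising model with respect to the graph G = (V, E). Fix a pair i ≠ j and suppose that X^i has linear conditional mean with respect to X^{−{i,j}}. Then X^i and X^j are conditionally independent given X^{−{i,j}} if and only if X^i and X^j are additively conditionally independent given X^{−{i,j}}. -/
open MeasureTheory

noncomputable section

/-- Expectation of a real-valued random variable. -/
def expec {Ω : Type*} [MeasurableSpace Ω] (μ : Measure Ω) (f : Ω → ℝ) : ℝ := ∫ ω, f ω ∂μ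

/-- Covariance of two real-valued random variables. -/
def covRV {Ω : Type*} [MeasurableSpace Ω] (μ : Measure Ω) (f g : Ω → ℝ) : ℝ :=
  expec μ (fun ω => f ω * g ω) - expec μ f * expec μ g

/-- The additive space `𝒜_{X^A}`: the linear span (inside the functions on `Ω`) of the
mean-zero functions of the single coordinates `X^k`, `k ∈ A`. -/
def addSpace {Ω ι α : Type*} [MeasurableSpace Ω] (μ : Measure Ω)
    (X : Ω → ι → α) (A : Set ι) : Submodule ℝ (Ω → ℝ) :=
  Submodule.span ℝ {f | ∃ k ∈ A, ∃ φ : α → ℝ,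
    expec μ (fun ω => φ (X ω k)) = 0 ∧ f = fun ω => φ (X ω k)}

/-- Additive conditional independence of `X^A` and `X^B` given `X^C`:
`(𝒜_A + 𝒜_C) ⊖ 𝒜_C` is orthogonal in `L²(P)` to `(𝒜_B + 𝒜_C) ⊖ 𝒜_C`. -/
def ACI {Ω ι α : Type*} [MeasurableSpace Ω] (μ : Measure Ω)
    (X : Ω → ι → α) (A B C : Set ι) : Prop :=
  ∀ f ∈ addSpace μ X (A ∪ C),
    (∀ h ∈ addSpace μ X C, expec μ (fun ω => f ω * h ω) = 0) →
  ∀ g ∈ addSpace μ X (B ∪ C),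
    (∀ h ∈ addSpace μ X C, expec μ (fun ω => g ω * h ω) = 0) →
      expec μ (fun ω => f ω * g ω) = 0

/-- Conditional independence of the coordinates `X^i` and `X^j` given the remaining
coordinates `X^{-{i,j}}`, expressed by the standard factorization of the joint law of
discrete variables. -/
def CIpair {Ω ι α : Type*} [MeasurableSpace Ω] (μ : Measure Ω)
    (X : Ω → ι → α) (i j : ι) : Prop :=
  ∀ (a b : α) (z : ι → α),
    μ {ω | X ω i = a ∧ X ω j = b ∧ ∀ k, k ≠ i → k ≠ j → X ω k = z k} *
      μ {ω | ∀ k, k ≠ i → k ≠ j → X ω k = z k} =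
    μ {ω | X ω i = a ∧ ∀ k, k ≠ i → k ≠ j → X ω k = z k} *
      μ {ω | X ω j = b ∧ ∀ k, k ≠ i → k ≠ j → X ω k = z k}

/-- The indicator vector `V(x) = (1_{{1}}(x), …, 1_{{m}}(x))` of a value in `{0,1,…,m}`. -/
def Vfun {m : ℕ} (x : Fin (m + 1)) : Fin m → ℝ :=
  fun a => if (x : ℕ) = (a : ℕ) + 1 then 1 else 0

/-- Adjacency relation of the reduced graph obtained from `E` by removing the edge `(i,j)`
(in both directions) and all edges between `R` and its complement. -/
def reducedAdj {ι : Type*} (E : Set (ι × ι)) (i j : ι) (R : Set ι) : ι → ι → Prop :=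
  fun k l => (k, l) ∈ E ∧ ¬(k = i ∧ l = j) ∧ ¬(k = j ∧ l = i) ∧ (k ∈ R ↔ l ∈ R)

/-- `R ⊆ V ∖ {i,j}` is an `(i,j)`-separator: in the reduced graph, `i` and `j` lie in
distinct connected components, i.e. `j` is not reachable from `i`. -/
def IsSeparator {ι : Type*} (E : Set (ι × ι)) (i j : ι) (R : Set ι) : Prop :=
  i ∉ R ∧ j ∉ R ∧ ¬ Relation.ReflTransGen (reducedAdj E i j R) i j

/-- The node set of the connected component of `k` in the reduced graph. -/
def component {ι : Type*} (E : Set (ι × ι)) (i j : ι) (R : Set ι) (k : ι) : Set ι :=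
  {l | Relation.ReflTransGen (reducedAdj E i j R) k l}

/-- A real-valued node variable `X^k` has linear conditional mean with respect to `X^D`:
either `D = ∅`, or there is `ξ ∈ ℝ^D` with `E(X^k − E X^k | X^D) = ξᵀ (X^D − E X^D)` a.s.
(stated via integration over each event `{X^D = z}`). -/
def LinCondMean {Ω ι : Type*} [MeasurableSpace Ω] [Fintype ι] (μ : MeasureTheory.Measure Ω)
    (X : Ω → ι → ℝ) (k : ι) (D : Set ι) : Prop :=
  D = ∅ ∨ ∃ ξ : ι → ℝ, (∀ d, d ∉ D → ξ d = 0) ∧ ∀ z : ι → ℝ,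
    (∫ ω in {ω | ∀ d ∈ D, X ω d = z d}, (X ω k - expec μ fun ω' => X ω' k) ∂μ) =
      (∑ d : ι, ξ d * (z d - expec μ fun ω' => X ω' d)) *
        (μ {ω | ∀ d ∈ D, X ω d = z d}).toReal

/-- The `±1` vector associated with a Boolean configuration. -/
def signVec {p : ℕ} (s : Fin p → Bool) : Fin p → ℝ := fun k => if s k then 1 else -1

/-- The (unnormalized) symmetric Ising weight `exp(Σ_{i<j} β_{ij} x^i x^j)`. -/
def isingWeight {p : ℕ} (β : Matrix (Fin p) (Fin p) ℝ) (x : Fin p → ℝ) : ℝ :=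
  Real.exp (∑ i : Fin p, ∑ j : Fin p, if i < j then β i j * x i * x j else 0)

/-- The partition function of the symmetric Ising model. -/
def isingZ {p : ℕ} (β : Matrix (Fin p) (Fin p) ℝ) : ℝ :=
  ∑ s : Fin p → Bool, isingWeight β (signVec s)

/-- `X` follows the symmetric Ising model with parameter `β` (symmetric, zero diagonal):
`X` takes values in `{−1,1}^p` and has p.m.f. `z(β)⁻¹ exp(Σ_{i<j} β_{ij} x^i x^j)`. -/
def IsSymIsing {Ω : Type*} [MeasurableSpace Ω] (μ : MeasureTheory.Measure Ω) {p : ℕ}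
    (X : Ω → Fin p → ℝ) (β : Matrix (Fin p) (Fin p) ℝ) : Prop :=
  β.IsSymm ∧ (∀ i, β i i = 0) ∧ (∀ ω k, X ω k = 1 ∨ X ω k = -1) ∧
    ∀ s : Fin p → Bool,
      μ {ω | ∀ k, X ω k = signVec s k} =
        ENNReal.ofReal (isingWeight β (signVec s) / isingZ β)

/-- The edge set of the (symmetric) Ising model: `(i,j) ∈ E` iff `i ≠ j` and `β_{ij} ≠ 0`. -/
def isingEdges {p : ℕ} (β : Matrix (Fin p) (Fin p) ℝ) : Set (Fin p × Fin p) :=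
  {e | e.1 ≠ e.2 ∧ β e.1 e.2 ≠ 0}

namespace S6

open Finset
open scoped Classical
set_option linter.unusedSectionVars false
set_option maxHeartbeats 1000000

def cfilter {α : Type*} [Fintype α] (Φ : α → Prop) : Finset α :=
  @Finset.filter α Φ (fun _ => Classical.propDecidable _) Finset.univ

theorem mem_cfilter {α : Type*} [Fintype α] {Φ : α → Prop} {x : α} :
    x ∈ cfilter Φ ↔ Φ x := by
  unfold cfilter
  rw [Finset.mem_filter]
  simp

section Meas

variable {Ω : Type*} [MeasurableSpace Ω] (μ : Measure Ω) [IsProbabilityMeasure μ]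
  {p : ℕ} (X : Ω → Fin p → ℝ)

def cellSet (s : Fin p → Bool) : Set Ω := {ω | ∀ k, X ω k = signVec s k}

def sigf (ω : Ω) : Fin p → Bool := fun k => if X ω k = 1 then true else false

variable (hmeas : ∀ k, Measurable fun ω => X ω k)
  (hpm : ∀ ω k, X ω k = 1 ∨ X ω k = -1)

include hmeas hpm

theorem hXsig : ∀ ω, X ω = signVec (sigf X ω) := by
  intro ω; funext k
  rcases hpm ω k with h | h <;> simp [signVec, sigf, h] <;> norm_num

theorem mem_cell_iff (ω : Ω) (s : Fin p → Bool) : ω ∈ cellSet X s ↔ sigf X ω = s := by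
  constructor
  · intro h
    have hx : X ω = signVec s := funext h
    funext k
    simp only [sigf, hx, signVec]
    cases hs : s k <;> norm_num
  · rintro rfl; intro k; rw [hXsig X hmeas hpm ω]

theorem cell_meas (s : Fin p → Bool) : MeasurableSet (cellSet X s) := by
  have : cellSet X s = ⋂ k, (fun ω => X ω k) ⁻¹' {signVec s k} := by
    ext ω; simp [cellSet, Set.mem_iInter]
  rw [this]
  exact MeasurableSet.iInter fun k => (hmeas k) (measurableSet_singleton _)

theorem set_eq_biUnion (Φ : (Fin p → ℝ) → Prop) :
    {ω | Φ (X ω)} = ⋃ s ∈ cfilter (fun s => Φ (signVec s)), cellSet X s := by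
  ext ω
  simp only [Set.mem_setOf_eq, Set.mem_iUnion, mem_cfilter]
  constructor
  · intro h
    exact ⟨sigf X ω, by rwa [← hXsig X hmeas hpm ω], (mem_cell_iff X hmeas hpm ω _).2 rfl⟩
  · rintro ⟨s, hs, hc⟩
    have := (mem_cell_iff X hmeas hpm ω s).1 hc
    rw [hXsig X hmeas hpm ω, this]; exact hs

theorem meas_set (Φ : (Fin p → ℝ) → Prop) :
    μ {ω | Φ (X ω)} = ∑ s ∈ cfilter (fun s => Φ (signVec s)), μ (cellSet X s) := by
  rw [set_eq_biUnion X hmeas hpm Φ]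
  refine measure_biUnion_finset ?_ (fun s _ => cell_meas X hmeas hpm s)
  intro s _ t _ hst
  refine Set.disjoint_left.2 fun ω h1 h2 => hst ?_
  rw [← (mem_cell_iff X hmeas hpm ω s).1 h1, (mem_cell_iff X hmeas hpm ω t).1 h2]

theorem fun_repr (F : (Fin p → ℝ) → ℝ) :
    (fun ω => F (X ω)) =
      fun ω => ∑ s : Fin p → Bool, (cellSet X s).indicator (fun _ => F (signVec s)) ω := by
  funext ω
  rw [Finset.sum_eq_single (sigf X ω)]
  · rw [Set.indicator_of_mem ((mem_cell_iff X hmeas hpm ω _).2 rfl), hXsig X hmeas hpm ω]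
  · intro s _ hs
    exact Set.indicator_of_notMem (fun h => hs ((mem_cell_iff X hmeas hpm ω s).1 h).symm) _
  · simp

theorem integrable_comp (F : (Fin p → ℝ) → ℝ) : Integrable (fun ω => F (X ω)) μ := by
  rw [fun_repr X hmeas hpm F]
  exact integrable_finset_sum _ fun s _ =>
    (integrable_const _).indicator (cell_meas X hmeas hpm s)

theorem expec_comp (F : (Fin p → ℝ) → ℝ) :
    expec μ (fun ω => F (X ω)) = ∑ s : Fin p → Bool, F (signVec s) * (μ (cellSet X s)).toReal := by
  rw [expec, fun_repr X hmeas hpm F, integral_finset_sum _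
    (fun s _ => (integrable_const _).indicator (cell_meas X hmeas hpm s))]
  refine Finset.sum_congr rfl fun s _ => ?_
  rw [integral_indicator_const _ (cell_meas X hmeas hpm s), smul_eq_mul, mul_comm, measureReal_def]

theorem setint_comp (Φ : (Fin p → ℝ) → Prop) (F : (Fin p → ℝ) → ℝ) :
    (∫ ω in {ω | Φ (X ω)}, F (X ω) ∂μ) =
      ∑ s ∈ cfilter (fun s => Φ (signVec s)), F (signVec s) * (μ (cellSet X s)).toReal := by
  have hms : MeasurableSet {ω | Φ (X ω)} := by
    rw [set_eq_biUnion X hmeas hpm Φ]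
    exact (cfilter (fun s => Φ (signVec s))).measurableSet_biUnion
      (fun s _ => cell_meas X hmeas hpm s)
  rw [← integral_indicator hms]
  have : ∀ ω, Set.indicator {ω | Φ (X ω)} (fun ω => F (X ω)) ω
      = (fun x => if Φ x then F x else 0) (X ω) := by
    intro ω
    by_cases h : ω ∈ {ω' | Φ (X ω')}
    · rw [Set.indicator_of_mem h]
      have hΦ : Φ (X ω) := h
      simp [hΦ]
    · rw [Set.indicator_of_notMem h]
      have hΦ : ¬ Φ (X ω) := h
      simp [hΦ]
  calc ∫ ω, Set.indicator {ω | Φ (X ω)} (fun ω => F (X ω)) ω ∂μ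
      = expec μ (fun ω => (fun x => if Φ x then F x else 0) (X ω)) := by
        rw [expec]; exact integral_congr_ae (Filter.Eventually.of_forall this)
    _ = ∑ s : Fin p → Bool, (if Φ (signVec s) then F (signVec s) else 0) * (μ (cellSet X s)).toReal :=
        expec_comp μ X hmeas hpm (fun x => if Φ x then F x else 0)
    _ = _ := by
        unfold cfilter
        rw [Finset.sum_filter]
        exact Finset.sum_congr rfl fun s _ => by split <;> simp


end Meas

section Comb

def svB : Bool → ℝ
  | true => 1
  | false => -1

@[simp] theorem svB_true : svB true = 1 := rfl
@[simp] theorem svB_false : svB false = -1 := rfl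

theorem signVec_eq_svB {p : ℕ} (s : Fin p → Bool) (k : Fin p) : signVec s k = svB (s k) := by
  cases h : s k <;> simp [signVec, h]

variable {p : ℕ} (i j : Fin p) (hij : i ≠ j)

/-- the configuration with value `a` at `i`, `b` at `j`, and `y` elsewhere -/
def cl (a b : Bool) (y : Fin p → Bool) : Fin p → Bool :=
  Function.update (Function.update y i a) j b

theorem cl_j (a b : Bool) (y : Fin p → Bool) : cl i j a b y j = b := by
  simp [cl]

include hij in
theorem cl_i (a b : Bool) (y : Fin p → Bool) : cl i j a b y i = a := by
  simp [cl, Function.update_of_ne hij]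

theorem cl_other (a b : Bool) (y : Fin p → Bool) {k : Fin p} (hki : k ≠ i) (hkj : k ≠ j) :
    cl i j a b y k = y k := by
  simp [cl, Function.update_of_ne hkj, Function.update_of_ne hki]

/-- agreement off `{i,j}` -/
def agr (y s : Fin p → Bool) : Prop := ∀ k, k ≠ i → k ≠ j → s k = y k

include hij in
theorem cl_eq_self {y s : Fin p → Bool} (h : agr i j y s) : cl i j (s i) (s j) y = s := by
  funext k
  by_cases hkj : k = j
  · rw [hkj, cl_j]
  · by_cases hki : k = i
    · rw [hki, cl_i i j hij]
    · rw [cl_other i j _ _ y hki hkj, h k hki hkj]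

include hij in
theorem agr_cl (a b : Bool) (y : Fin p → Bool) : agr i j y (cl i j a b y) := by
  intro k hki hkj; exact cl_other i j a b y hki hkj

include hij in
theorem fiber_sum (y : Fin p → Bool) (G : (Fin p → Bool) → ℝ) :
    ∑ s ∈ cfilter (fun s => agr i j y s), G s
      = ∑ a : Bool, ∑ b : Bool, G (cl i j a b y) := by
  have h2 : ∑ ab : Bool × Bool, G (cl i j ab.1 ab.2 y)
      = ∑ a : Bool, ∑ b : Bool, G (cl i j a b y) :=
    Fintype.sum_prod_type (f := fun ab : Bool × Bool => G (cl i j ab.1 ab.2 y))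
  rw [← h2]
  refine Finset.sum_nbij' (fun s => (s i, s j)) (fun ab => cl i j ab.1 ab.2 y) ?_ ?_ ?_ ?_ ?_
  · intro s _; exact mem_univ _
  · intro ab _
    rw [mem_cfilter]
    exact agr_cl i j hij ab.1 ab.2 y
  · intro s hs
    rw [mem_cfilter] at hs
    exact cl_eq_self i j hij hs
  · intro ab _
    simp [cl_i i j hij, cl_j i j]
  · intro s hs
    rw [mem_cfilter] at hs
    rw [cl_eq_self i j hij hs]

include hij in
theorem group_sum (G : (Fin p → Bool) → ℝ) :
    ∑ s : Fin p → Bool, G s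
      = ∑ y ∈ cfilter (fun y => y i = false ∧ y j = false),
          ∑ a : Bool, ∑ b : Bool, G (cl i j a b y) := by
  rw [← Finset.sum_fiberwise_of_maps_to (g := fun s => cl i j false false s)
    (t := cfilter (fun y => y i = false ∧ y j = false)) ?_ G]
  · refine Finset.sum_congr rfl fun y hy => ?_
    rw [mem_cfilter] at hy
    rw [← fiber_sum i j hij y G]
    refine Finset.sum_congr ?_ fun _ _ => rfl
    ext s
    rw [Finset.mem_filter, mem_cfilter]
    constructor
    · rintro ⟨-, h⟩ k hki hkj
      rw [← h, cl_other i j _ _ s hki hkj]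
    · intro h
      refine ⟨mem_univ s, ?_⟩
      funext k
      by_cases hkj : k = j
      · rw [hkj, cl_j, hy.2]
      · by_cases hki : k = i
        · rw [hki, cl_i i j hij, hy.1]
        · rw [cl_other i j _ _ s hki hkj, h k hki hkj]
  · intro s _
    rw [mem_cfilter]
    exact ⟨cl_i i j hij _ _ _, cl_j i j _ _ _⟩

/-- the exponent of the Ising weight -/
def Wt (β : Matrix (Fin p) (Fin p) ℝ) (x : Fin p → ℝ) : ℝ :=
  ∑ k : Fin p, ∑ l : Fin p, if k < l then β k l * x k * x l else 0

include hij in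
theorem sv_cl_i (a b : Bool) (y : Fin p → Bool) :
    signVec (cl i j a b y) i = svB a := by
  rw [signVec_eq_svB, cl_i i j hij]

theorem sv_cl_j (a b : Bool) (y : Fin p → Bool) :
    signVec (cl i j a b y) j = svB b := by
  rw [signVec_eq_svB, cl_j]

theorem sv_cl_other (a b : Bool) (y : Fin p → Bool) {k : Fin p} (hki : k ≠ i) (hkj : k ≠ j) :
    signVec (cl i j a b y) k = signVec y k := by
  simp [signVec, cl_other i j a b y hki hkj]

theorem Wt_four_lt (β : Matrix (Fin p) (Fin p) ℝ) (hlt : i < j) (y : Fin p → Bool) :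
    Wt β (signVec (cl i j true true y)) + Wt β (signVec (cl i j false false y))
      = 4 * β i j + (Wt β (signVec (cl i j true false y)) + Wt β (signVec (cl i j false true y))) := by
  have hij : i ≠ j := ne_of_lt hlt
  have key : ∀ k l : Fin p,
      (if k < l then β k l * signVec (cl i j true true y) k * signVec (cl i j true true y) l else 0)
      + (if k < l then β k l * signVec (cl i j false false y) k * signVec (cl i j false false y) l else 0)
      - ((if k < l then β k l * signVec (cl i j true false y) k * signVec (cl i j true false y) l else 0)
      + (if k < l then β k l * signVec (cl i j false true y) k * signVec (cl i j false true y) l else 0))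
      = (if (k, l) = (i, j) then 4 * β i j else 0) := by
    intro k l
    by_cases hki : k = i
    · by_cases hlj : l = j
      · rw [hki, hlj]
        rw [sv_cl_i i j hij, sv_cl_i i j hij, sv_cl_i i j hij, sv_cl_i i j hij,
          sv_cl_j, sv_cl_j, sv_cl_j, sv_cl_j]
        simp [hlt, svB]
        ring
      · have hne : ((k, l) : Fin p × Fin p) ≠ (i, j) := fun h =>
          hlj (congrArg Prod.snd h)
        rw [if_neg hne, hki]
        by_cases hli : l = i
        · rw [hli]; simp [lt_irrefl]
        · rw [sv_cl_i i j hij, sv_cl_i i j hij, sv_cl_i i j hij, sv_cl_i i j hij,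
            sv_cl_other i j _ _ _ hli hlj, sv_cl_other i j _ _ _ hli hlj,
            sv_cl_other i j _ _ _ hli hlj, sv_cl_other i j _ _ _ hli hlj]
          by_cases hkl : i < l <;> simp [hkl, svB] <;> ring
    · have hne : ((k, l) : Fin p × Fin p) ≠ (i, j) := fun h =>
        hki (congrArg Prod.fst h)
      rw [if_neg hne]
      by_cases hkj : k = j
      · rw [hkj]
        by_cases hli : l = i
        · rw [hli]
          rw [sv_cl_j, sv_cl_j, sv_cl_j, sv_cl_j,
            sv_cl_i i j hij, sv_cl_i i j hij, sv_cl_i i j hij, sv_cl_i i j hij]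
          have : ¬ j < i := not_lt.2 (le_of_lt hlt)
          simp [this]
        · by_cases hlj : l = j
          · rw [hlj]; simp [lt_irrefl]
          · rw [sv_cl_j, sv_cl_j, sv_cl_j, sv_cl_j,
              sv_cl_other i j _ _ _ hli hlj, sv_cl_other i j _ _ _ hli hlj,
              sv_cl_other i j _ _ _ hli hlj, sv_cl_other i j _ _ _ hli hlj]
            by_cases hkl : j < l <;> simp [hkl, svB] <;> ring
      · by_cases hli : l = i
        · rw [hli]
          rw [sv_cl_other i j _ _ _ hki hkj, sv_cl_other i j _ _ _ hki hkj,
            sv_cl_other i j _ _ _ hki hkj, sv_cl_other i j _ _ _ hki hkj,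
            sv_cl_i i j hij, sv_cl_i i j hij, sv_cl_i i j hij, sv_cl_i i j hij]
          by_cases hkl : k < i <;> simp [hkl, svB] <;> ring
        · by_cases hlj : l = j
          · rw [hlj]
            rw [sv_cl_other i j _ _ _ hki hkj, sv_cl_other i j _ _ _ hki hkj,
              sv_cl_other i j _ _ _ hki hkj, sv_cl_other i j _ _ _ hki hkj,
              sv_cl_j, sv_cl_j, sv_cl_j, sv_cl_j]
            by_cases hkl : k < j <;> simp [hkl, svB] <;> ring
          · rw [sv_cl_other i j _ _ _ hki hkj, sv_cl_other i j _ _ _ hki hkj,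
              sv_cl_other i j _ _ _ hki hkj, sv_cl_other i j _ _ _ hki hkj,
              sv_cl_other i j _ _ _ hli hlj, sv_cl_other i j _ _ _ hli hlj,
              sv_cl_other i j _ _ _ hli hlj, sv_cl_other i j _ _ _ hli hlj]
            by_cases hkl : k < l <;> simp [hkl] <;> ring
  have hsum : Wt β (signVec (cl i j true true y)) + Wt β (signVec (cl i j false false y))
      - (Wt β (signVec (cl i j true false y)) + Wt β (signVec (cl i j false true y)))
      = ∑ kl : Fin p × Fin p, (if kl = (i, j) then 4 * β i j else 0) := by
    rw [Fintype.sum_prod_type (f := fun kl : Fin p × Fin p => if kl = (i, j) then 4 * β i j else 0)]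
    simp only [Wt, ← Finset.sum_add_distrib, ← Finset.sum_sub_distrib]
    exact Finset.sum_congr rfl fun k _ => Finset.sum_congr rfl fun l _ => key k l
  have hval : ∑ kl : Fin p × Fin p, (if kl = (i, j) then 4 * β i j else 0) = 4 * β i j := by
    rw [Finset.sum_ite_eq' univ ((i, j) : Fin p × Fin p) (fun _ => 4 * β i j)]
    simp
  linarith [hsum, hval]

include hij in
theorem Wt_four (β : Matrix (Fin p) (Fin p) ℝ) (hsym : β.IsSymm) (y : Fin p → Bool) :
    Wt β (signVec (cl i j true true y)) + Wt β (signVec (cl i j false false y))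
      = 4 * β i j + (Wt β (signVec (cl i j true false y)) + Wt β (signVec (cl i j false true y))) := by
  have hβ : β j i = β i j := by
    calc β j i = β.transpose i j := rfl
    _ = β i j := by rw [hsym]
  rcases lt_trichotomy i j with h | h | h
  · exact Wt_four_lt i j β h y
  · exact absurd h hij
  · have e : ∀ a b : Bool, cl i j a b y = cl j i b a y := by
      intro a b
      unfold cl
      rw [Function.update_comm hij]
    rw [e true true, e false false, e true false, e false true]
    rw [← hβ]
    have := Wt_four_lt j i β h y
    linarith [this]

include hij in
theorem ising_four (β : Matrix (Fin p) (Fin p) ℝ) (hsym : β.IsSymm) (hZ : isingZ β ≠ 0)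
    (y : Fin p → Bool) :
    (isingWeight β (signVec (cl i j true true y)) / isingZ β)
      * (isingWeight β (signVec (cl i j false false y)) / isingZ β)
      = Real.exp (4 * β i j) * ((isingWeight β (signVec (cl i j true false y)) / isingZ β)
        * (isingWeight β (signVec (cl i j false true y)) / isingZ β)) := by
  have h4 := Wt_four i j hij β hsym y
  have : isingWeight β (signVec (cl i j true true y))
      * isingWeight β (signVec (cl i j false false y))
      = Real.exp (4 * β i j) * (isingWeight β (signVec (cl i j true false y))
        * isingWeight β (signVec (cl i j false true y))) := by
    unfold isingWeight
    rw [← Real.exp_add, ← Real.exp_add, ← Real.exp_add]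
    refine congrArg Real.exp ?_
    have h4' := h4
    unfold Wt at h4'
    linarith [h4']

  rw [div_mul_div_comm, div_mul_div_comm, this]
  all_goals rw [mul_div_assoc]

end Comb

section Helpers

variable {p : ℕ} (i j : Fin p)

theorem svB_inj_iff (x a : Bool) : svB x = svB a ↔ x = a := by
  cases x <;> cases a <;> simp [svB] <;> norm_num

theorem filter_ij (hij : i ≠ j) (a b : Bool) (y : Fin p → Bool) :
    cfilter (fun s => s i = a ∧ s j = b ∧ agr i j y s) = {cl i j a b y} := by
  ext s
  simp only [mem_cfilter, mem_singleton]
  constructor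
  · rintro ⟨h1, h2, h3⟩
    rw [← cl_eq_self i j hij h3, h1, h2]
  · rintro rfl
    exact ⟨cl_i i j hij a b y, cl_j i j a b y, agr_cl i j hij a b y⟩

theorem filter_i (hij : i ≠ j) (a : Bool) (y : Fin p → Bool) :
    cfilter (fun s => s i = a ∧ agr i j y s) = {cl i j a true y, cl i j a false y} := by
  ext s
  simp only [mem_cfilter, mem_insert, mem_singleton]
  constructor
  · rintro ⟨h1, h3⟩
    have hs := cl_eq_self i j hij h3
    cases h2 : s j
    · right; rw [← hs, h1, h2]
    · left; rw [← hs, h1, h2]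
  · rintro (rfl | rfl) <;>
      exact ⟨cl_i i j hij _ _ y, agr_cl i j hij _ _ y⟩

theorem filter_j (hij : i ≠ j) (b : Bool) (y : Fin p → Bool) :
    cfilter (fun s => s j = b ∧ agr i j y s) = {cl i j true b y, cl i j false b y} := by
  ext s
  simp only [mem_cfilter, mem_insert, mem_singleton]
  constructor
  · rintro ⟨h1, h3⟩
    have hs := cl_eq_self i j hij h3
    cases h2 : s i
    · right; rw [← hs, h1, h2]
    · left; rw [← hs, h1, h2]
  · rintro (rfl | rfl) <;>
      exact ⟨cl_j i j _ _ y, agr_cl i j hij _ _ y⟩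

theorem cl_ne_b (hij : i ≠ j) (a b a' b' : Bool) (y : Fin p → Bool) (h : b ≠ b') :
    cl i j a b y ≠ cl i j a' b' y := fun he => by
  have hc := congrFun he j
  rw [cl_j, cl_j] at hc
  exact h hc

theorem cl_ne_a (hij : i ≠ j) (a b a' b' : Bool) (y : Fin p → Bool) (h : a ≠ a') :
    cl i j a b y ≠ cl i j a' b' y := fun he => by
  have hc := congrFun he i
  rw [cl_i i j hij, cl_i i j hij] at hc
  exact h hc

end Helpers

section IPW

variable {p : ℕ}

def ipW (π : (Fin p → Bool) → ℝ) (u v : (Fin p → Bool) → ℝ) : ℝ :=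
  ∑ s : Fin p → Bool, (u s * v s) * π s

theorem ipW_comm (π u v : (Fin p → Bool) → ℝ) : ipW π u v = ipW π v u :=
  Finset.sum_congr rfl fun s _ => by ring

theorem ipW_sumR (π : (Fin p → Bool) → ℝ) (u : (Fin p → Bool) → ℝ) {n : ℕ}
    (d : Fin n → ℝ) (v : Fin n → (Fin p → Bool) → ℝ) :
    ipW π u (fun s => ∑ κ, d κ * v κ s) = ∑ κ, d κ * ipW π u (v κ) := by
  unfold ipW
  have h1 : ∀ s : Fin p → Bool, (u s * (∑ κ, d κ * v κ s)) * π s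
      = ∑ κ, d κ * ((u s * v κ s) * π s) := by
    intro s
    rw [Finset.mul_sum, Finset.sum_mul]
    exact Finset.sum_congr rfl fun κ _ => by ring
  rw [Finset.sum_congr rfl fun s _ => h1 s, Finset.sum_comm]
  exact Finset.sum_congr rfl fun κ _ => (Finset.mul_sum _ _ _).symm

theorem ipW_sumL (π : (Fin p → Bool) → ℝ) {n : ℕ}
    (d : Fin n → ℝ) (v : Fin n → (Fin p → Bool) → ℝ) (u : (Fin p → Bool) → ℝ) :
    ipW π (fun s => ∑ κ, d κ * v κ s) u = ∑ κ, d κ * ipW π (v κ) u := by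
  rw [ipW_comm, ipW_sumR]
  exact Finset.sum_congr rfl fun κ _ => by rw [ipW_comm]

theorem ipW_addL (π u v w : (Fin p → Bool) → ℝ) :
    ipW π (fun s => u s + v s) w = ipW π u w + ipW π v w := by
  unfold ipW
  rw [← Finset.sum_add_distrib]
  exact Finset.sum_congr rfl fun s _ => by ring

theorem ipW_subR (π u v w : (Fin p → Bool) → ℝ) :
    ipW π u (fun s => v s - w s) = ipW π u v - ipW π u w := by
  unfold ipW
  rw [← Finset.sum_sub_distrib]
  exact Finset.sum_congr rfl fun s _ => by ring

theorem ipW_smulL (π : (Fin p → Bool) → ℝ) (c : ℝ) (u w : (Fin p → Bool) → ℝ) :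
    ipW π (fun s => c * u s) w = c * ipW π u w := by
  unfold ipW
  rw [Finset.mul_sum]
  exact Finset.sum_congr rfl fun s _ => by ring

theorem ipW_congrL (π : (Fin p → Bool) → ℝ) {u u' : (Fin p → Bool) → ℝ}
    (h : ∀ s, u s = u' s) (w : (Fin p → Bool) → ℝ) : ipW π u w = ipW π u' w := by
  unfold ipW
  exact Finset.sum_congr rfl fun s _ => by rw [h s]

end IPW

section AddSpaceChar

variable {Ω : Type*} [MeasurableSpace Ω] (μ : Measure Ω) [IsProbabilityMeasure μ]
  {p : ℕ} (X : Ω → Fin p → ℝ)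
  (hmeas : ∀ k, Measurable fun ω => X ω k)
  (hpm : ∀ ω k, X ω k = 1 ∨ X ω k = -1)

include hmeas hpm in
theorem expec_affine (c d : ℝ) (k : Fin p) :
    expec μ (fun ω => c + d * X ω k) = c + d * expec μ (fun ω => X ω k) := by
  have hint : Integrable (fun ω => X ω k) μ :=
    integrable_comp μ X hmeas hpm (fun x => x k)
  rw [expec, expec, integral_add (integrable_const c) (hint.const_mul d),
    integral_const, integral_const_mul]
  simp

include hmeas hpm in
theorem addSpace_char (mv : Fin p → ℝ) (hm : ∀ k, expec μ (fun ω => X ω k) = mv k)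
    (A : Set (Fin p)) :
    addSpace μ X A = Submodule.span ℝ ((fun k => (fun ω => X ω k - mv k)) '' A) := by
  apply le_antisymm
  · rw [addSpace]
    refine Submodule.span_le.2 ?_
    rintro f ⟨k, hk, φ, hmean, rfl⟩
    set c : ℝ := (φ 1 + φ (-1)) / 2 with hc
    set d : ℝ := (φ 1 - φ (-1)) / 2 with hd
    have hpt : (fun ω => φ (X ω k)) = fun ω => c + d * X ω k := by
      funext ω
      rcases hpm ω k with h | h <;> rw [h] <;> rw [hc, hd] <;> ring
    rw [hpt] at hmean ⊢
    rw [expec_affine μ X hmeas hpm c d k, hm k] at hmean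
    have hfeq : (fun ω => c + d * X ω k) = d • (fun ω => X ω k - mv k) := by
      funext ω
      simp only [Pi.smul_apply, smul_eq_mul]
      have hcd : c = -(d * mv k) := by linarith
      rw [hcd]; ring
    rw [hfeq]
    exact Submodule.smul_mem _ d (Submodule.subset_span ⟨k, hk, rfl⟩)
  · refine Submodule.span_le.2 ?_
    rintro f ⟨k, hk, rfl⟩
    rw [addSpace]
    have hmean : expec μ (fun ω => X ω k - mv k) = 0 := by
      have he : (fun ω => X ω k - mv k) = fun ω => (-mv k) + 1 * X ω k := by
        funext ω; ring
      rw [he, expec_affine μ X hmeas hpm _ _ k, hm k]; ring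
    exact Submodule.subset_span ⟨k, hk, fun x => x - mv k, hmean, rfl⟩

include hmeas hpm in
theorem mem_decomp (mv : Fin p → ℝ) (hm : ∀ k, expec μ (fun ω => X ω k) = mv k)
    (A : Set (Fin p)) (f : Ω → ℝ) (hf : f ∈ addSpace μ X A) :
    ∃ (n : ℕ) (c : Fin n → ℝ) (k : Fin n → Fin p), (∀ ι, k ι ∈ A) ∧
      ∀ ω, f ω = ∑ ι, c ι * (X ω (k ι) - mv (k ι)) := by
  rw [addSpace_char μ X hmeas hpm mv hm A, Submodule.mem_span_set'] at hf
  obtain ⟨n, cf, g, hg⟩ := hf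
  have hmem : ∀ ι : Fin n, ∃ x, x ∈ A ∧ (fun ω => X ω x - mv x) = (g ι : Ω → ℝ) := by
    intro ι
    obtain ⟨x, hx, he⟩ := (g ι).2
    exact ⟨x, hx, he⟩
  choose k hkA hkE using hmem
  refine ⟨n, cf, k, hkA, fun ω => ?_⟩
  have hω := congrFun hg ω
  rw [Finset.sum_apply] at hω
  rw [← hω]
  refine Finset.sum_congr rfl fun ι _ => ?_
  rw [← hkE ι]
  simp

include hmeas hpm in
theorem Xc_mem (mv : Fin p → ℝ) (hm : ∀ k, expec μ (fun ω => X ω k) = mv k)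
    (A : Set (Fin p)) (l : Fin p) (hl : l ∈ A) :
    (fun ω => X ω l - mv l) ∈ addSpace μ X A := by
  rw [addSpace_char μ X hmeas hpm mv hm A]
  exact Submodule.subset_span ⟨l, hl, rfl⟩

end AddSpaceChar

end S6

/-- under a symmetric Ising model, if `X^i` has linear conditional mean with
respect to `X^{−{i,j}}`, then conditional independence of `X^i` and `X^j` given the rest
is equivalent to additive conditional independence. -/
theorem stmt6 {Ω : Type*} [MeasurableSpace Ω] (μ : MeasureTheory.Measure Ω)
    [MeasureTheory.IsProbabilityMeasure μ]
    (p : ℕ) (hp : 3 ≤ p) (X : Ω → Fin p → ℝ) (hmeas : ∀ k, Measurable fun ω => X ω k)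
    (β : Matrix (Fin p) (Fin p) ℝ) (hIsing : IsSymIsing μ X β)
    (i j : Fin p) (hij : i ≠ j)
    (hLCM : LinCondMean μ X i ({i, j}ᶜ : Set (Fin p))) :
    CIpair μ X i j ↔ ACI μ X {i} {j} ({i, j}ᶜ : Set (Fin p)) := by
  classical
  obtain ⟨hsym, hdiag, hpm, hlaw⟩ := hIsing
  have hCmem : ∀ k : Fin p, k ∈ ({i, j}ᶜ : Set (Fin p)) ↔ (k ≠ i ∧ k ≠ j) := by
    intro k
    simp only [Set.mem_compl_iff, Set.mem_insert_iff, Set.mem_singleton_iff]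
    tauto
  have hZpos : 0 < isingZ β :=
    Finset.sum_pos (fun s _ => Real.exp_pos _) ⟨(fun _ => false), Finset.mem_univ _⟩
  set π : (Fin p → Bool) → ℝ := fun s => isingWeight β (signVec s) / isingZ β with hπdef
  have hπpos : ∀ s, 0 < π s := fun s => div_pos (Real.exp_pos _) hZpos
  have hπ0 : ∀ s, 0 ≤ π s := fun s => le_of_lt (hπpos s)
  have hcell : ∀ s, μ (S6.cellSet X s) = ENNReal.ofReal (π s) := fun s => hlaw s
  have measμ : ∀ Φ : (Fin p → ℝ) → Prop, μ {ω | Φ (X ω)}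
      = ENNReal.ofReal (∑ s ∈ S6.cfilter (fun s => Φ (signVec s)), π s) := by
    intro Φ
    rw [S6.meas_set μ X hmeas hpm Φ, ENNReal.ofReal_sum_of_nonneg (fun s _ => hπ0 s)]
    exact Finset.sum_congr rfl fun s _ => hcell s
  have intD : ∀ (Φ : (Fin p → ℝ) → Prop) (F : (Fin p → ℝ) → ℝ),
      (∫ ω in {ω | Φ (X ω)}, F (X ω) ∂μ)
        = ∑ s ∈ S6.cfilter (fun s => Φ (signVec s)), F (signVec s) * π s := by
    intro Φ F
    rw [S6.setint_comp μ X hmeas hpm Φ F]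
    refine Finset.sum_congr rfl fun s _ => ?_
    rw [hcell s, ENNReal.toReal_ofReal (hπ0 s)]
  have expecD : ∀ F : (Fin p → ℝ) → ℝ,
      expec μ (fun ω => F (X ω)) = ∑ s : Fin p → Bool, F (signVec s) * π s := by
    intro F
    rw [S6.expec_comp μ X hmeas hpm F]
    refine Finset.sum_congr rfl fun s _ => ?_
    rw [hcell s, ENNReal.toReal_ofReal (hπ0 s)]
  have hsum1 : ∑ s : Fin p → Bool, π s = 1 := by
    rw [hπdef, ← Finset.sum_div]
    exact div_self (ne_of_gt hZpos)
  set m : Fin p → ℝ := fun k => expec μ fun ω' => X ω' k with hmdef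
  have hmval : ∀ k, m k = ∑ s : Fin p → Bool, signVec s k * π s := by
    intro k
    rw [hmdef]
    exact expecD (fun x => x k)
  have hIid : ∀ y, π (S6.cl i j true true y) * π (S6.cl i j false false y)
      = Real.exp (4 * β i j) * (π (S6.cl i j true false y) * π (S6.cl i j false true y)) :=
    fun y => S6.ising_four i j hij β hsym (ne_of_gt hZpos) y
  have bridge : ∀ (f g : Ω → ℝ) (F G : (Fin p → ℝ) → ℝ),
      (∀ ω, f ω = F (X ω)) → (∀ ω, g ω = G (X ω)) →
      expec μ (fun ω => f ω * g ω)
        = S6.ipW π (fun s => F (signVec s)) (fun s => G (signVec s)) := by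
    intro f g F G hf hg
    have hfg : (fun ω => f ω * g ω) = fun ω => (fun x => F x * G x) (X ω) := by
      funext ω; simp only []; rw [hf, hg]
    rw [hfg, expecD (fun x => F x * G x)]
    exact Finset.sum_congr rfl fun s _ => rfl
  obtain ⟨k0, hk0i, hk0j⟩ : ∃ k : Fin p, k ≠ i ∧ k ≠ j := by
    have h2 : 0 < ({i, j}ᶜ : Finset (Fin p)).card := by
      rw [Finset.card_compl]
      have h1 : ({i, j} : Finset (Fin p)).card ≤ 2 :=
        le_trans (Finset.card_insert_le _ _) (by simp)
      have h3 : Fintype.card (Fin p) = p := Fintype.card_fin p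
      omega
    obtain ⟨k, hk⟩ := Finset.card_pos.1 h2
    rw [Finset.mem_compl] at hk
    simp only [Finset.mem_insert, Finset.mem_singleton] at hk
    push_neg at hk
    exact ⟨k, hk⟩
  have hCne : ({i, j}ᶜ : Set (Fin p)) ≠ ∅ := by
    intro h
    have hm0 : k0 ∈ ({i, j}ᶜ : Set (Fin p)) := (hCmem k0).2 ⟨hk0i, hk0j⟩
    rw [h] at hm0
    exact hm0
  obtain ⟨ξ, hξ0, hξ⟩ := hLCM.resolve_left hCne
  set ℓ : (Fin p → Bool) → ℝ := fun y => ∑ d, ξ d * (signVec y d - m d) with hℓdef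
  have hξi : ξ i = 0 := hξ0 i (by simp [hCmem])
  have hξj : ξ j = 0 := hξ0 j (by simp [hCmem])
  have hℓcl : ∀ a b y, ℓ (S6.cl i j a b y) = ℓ y := by
    intro a b y
    rw [hℓdef]
    refine Finset.sum_congr rfl fun d _ => ?_
    by_cases hdi : d = i
    · rw [hdi, hξi]; ring
    · by_cases hdj : d = j
      · rw [hdj, hξj]; ring
      · rw [S6.sv_cl_other i j a b y hdi hdj]
  have lcmFiber : ∀ y : Fin p → Bool,
      (∑ a : Bool, ∑ b : Bool, (S6.svB a - m i) * π (S6.cl i j a b y))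
        = ℓ y * ∑ a : Bool, ∑ b : Bool, π (S6.cl i j a b y) := by
    intro y
    have h := hξ (signVec y)
    have hmm : ∀ k : Fin p, (expec μ fun ω' => X ω' k) = m k := fun k => rfl
    simp only [hmm] at h
    have hfil : S6.cfilter
          (fun s : Fin p → Bool => ∀ d ∈ ({i, j}ᶜ : Set (Fin p)), signVec s d = signVec y d)
        = S6.cfilter (fun s => S6.agr i j y s) := by
      ext s
      rw [S6.mem_cfilter, S6.mem_cfilter]
      constructor
      · intro h2 k hki hkj
        have h3 := h2 k ((hCmem k).2 ⟨hki, hkj⟩)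
        rwa [S6.signVec_eq_svB, S6.signVec_eq_svB, S6.svB_inj_iff] at h3
      · intro h2 d hd
        rw [S6.signVec_eq_svB, S6.signVec_eq_svB, h2 d ((hCmem d).1 hd).1 ((hCmem d).1 hd).2]
    have hL0 := intD (fun x => ∀ d ∈ ({i, j}ᶜ : Set (Fin p)), x d = signVec y d)
      (fun x => x i - m i)
    have hM0 := measμ (fun x => ∀ d ∈ ({i, j}ᶜ : Set (Fin p)), x d = signVec y d)
    rw [hfil] at hL0 hM0
    rw [hL0, hM0, ENNReal.toReal_ofReal (Finset.sum_nonneg fun s _ => hπ0 s)] at h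
    rw [S6.fiber_sum i j hij y (fun s => (signVec s i - m i) * π s),
      S6.fiber_sum i j hij y π] at h
    have hgoal : (∑ a : Bool, ∑ b : Bool, (S6.svB a - m i) * π (S6.cl i j a b y))
        = ∑ a : Bool, ∑ b : Bool, (signVec (S6.cl i j a b y) i - m i) * π (S6.cl i j a b y) :=
      Finset.sum_congr rfl fun a _ => Finset.sum_congr rfl fun b _ => by
        rw [S6.sv_cl_i i j hij]
    rw [hgoal, h, hℓdef]
  have orthLCM : ∀ l, l ≠ i → l ≠ j →
      S6.ipW π (fun s => (signVec s i - m i) - ℓ s) (fun s => signVec s l - m l) = 0 := by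
    intro l hli hlj
    show (∑ s : Fin p → Bool, (((signVec s i - m i) - ℓ s) * (signVec s l - m l)) * π s) = 0
    rw [S6.group_sum i j hij
      (fun s => (((signVec s i - m i) - ℓ s) * (signVec s l - m l)) * π s)]
    refine Finset.sum_eq_zero fun y hy => ?_
    have hfib := lcmFiber y
    have hterm : ∀ a b : Bool,
        (((signVec (S6.cl i j a b y) i - m i) - ℓ (S6.cl i j a b y))
          * (signVec (S6.cl i j a b y) l - m l)) * π (S6.cl i j a b y)
        = (((S6.svB a - m i) - ℓ y) * (signVec y l - m l)) * π (S6.cl i j a b y) := by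
      intro a b
      rw [S6.sv_cl_i i j hij, hℓcl, S6.sv_cl_other i j _ _ _ hli hlj]
    simp only [hterm]
    simp only [Fintype.sum_bool, S6.svB_true, S6.svB_false] at hfib ⊢
    linear_combination (signVec y l - m l) * hfib
  set Δ : ℝ := S6.ipW π (fun s => (signVec s i - m i) - ℓ s) (fun s => signVec s j - m j)
    with hΔdef
  have hQpos : ∀ y : Fin p → Bool, 0 < ∑ a : Bool, ∑ b : Bool, π (S6.cl i j a b y) := by
    intro y
    simp only [Fintype.sum_bool]
    have h1 := hπpos (S6.cl i j true true y)
    have h2 := hπpos (S6.cl i j true false y)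
    have h3 := hπpos (S6.cl i j false true y)
    have h4 := hπpos (S6.cl i j false false y)
    linarith
  have hTQ : ∀ y : Fin p → Bool,
      (∑ a : Bool, ∑ b : Bool, (((S6.svB a - m i) - ℓ y) * (S6.svB b - m j)) * π (S6.cl i j a b y))
        * (∑ a : Bool, ∑ b : Bool, π (S6.cl i j a b y))
      = (Real.exp (4 * β i j) - 1)
        * (4 * (π (S6.cl i j true false y) * π (S6.cl i j false true y))) := by
    intro y
    have hfib := lcmFiber y
    have hid := hIid y
    simp only [Fintype.sum_bool, S6.svB_true, S6.svB_false] at hfib ⊢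
    linear_combination ((π (S6.cl i j true true y) - π (S6.cl i j true false y)
        + π (S6.cl i j false true y) - π (S6.cl i j false false y))
      - m j * (π (S6.cl i j true true y) + π (S6.cl i j true false y)
        + π (S6.cl i j false true y) + π (S6.cl i j false false y))) * hfib + 4 * hid
  have hΔsum : Δ = ∑ y ∈ S6.cfilter (fun y : Fin p → Bool => y i = false ∧ y j = false),
      (∑ a : Bool, ∑ b : Bool,
        (((S6.svB a - m i) - ℓ y) * (S6.svB b - m j)) * π (S6.cl i j a b y)) := by
    rw [hΔdef]
    show (∑ s : Fin p → Bool, (((signVec s i - m i) - ℓ s) * (signVec s j - m j)) * π s) = _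
    rw [S6.group_sum i j hij
      (fun s => (((signVec s i - m i) - ℓ s) * (signVec s j - m j)) * π s)]
    refine Finset.sum_congr rfl fun y hy => ?_
    refine Finset.sum_congr rfl fun a _ => Finset.sum_congr rfl fun b _ => ?_
    rw [S6.sv_cl_i i j hij, S6.sv_cl_j i j, hℓcl]
  set S : ℝ := ∑ y ∈ S6.cfilter (fun y : Fin p → Bool => y i = false ∧ y j = false),
      (4 * (π (S6.cl i j true false y) * π (S6.cl i j false true y))
        / (∑ a : Bool, ∑ b : Bool, π (S6.cl i j a b y))) with hSdef
  have hΔS : Δ = (Real.exp (4 * β i j) - 1) * S := by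
    rw [hΔsum, hSdef, Finset.mul_sum]
    refine Finset.sum_congr rfl fun y hy => ?_
    rw [mul_div_assoc' , eq_div_iff (ne_of_gt (hQpos y))]
    exact hTQ y
  have hSpos : 0 < S := by
    rw [hSdef]
    refine Finset.sum_pos (fun y hy => ?_) ?_
    · refine div_pos ?_ (hQpos y)
      have h2 := hπpos (S6.cl i j true false y)
      have h3 := hπpos (S6.cl i j false true y)
      nlinarith
    · exact ⟨fun _ => false, S6.mem_cfilter.2 ⟨rfl, rfl⟩⟩
  have hΔiff : Δ = 0 ↔ β i j = 0 := by
    constructor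
    · intro h0
      rw [hΔS] at h0
      rcases mul_eq_zero.1 h0 with hE | hS
      · have he1 : Real.exp (4 * β i j) = 1 := by linarith
        have := (Real.exp_eq_one_iff _).1 he1
        linarith
      · exact absurd hS (ne_of_gt hSpos)
    · intro h0
      rw [hΔS, h0]
      norm_num
  have hsvT : ∀ (s : Fin p → Bool) (k : Fin p), signVec s k = 1 ↔ s k = true := by
    intro s k
    rw [S6.signVec_eq_svB]
    cases hs : s k <;> simp [S6.svB] <;> norm_num
  have hsvF : ∀ (s : Fin p → Bool) (k : Fin p), signVec s k = -1 ↔ s k = false := by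
    intro s k
    rw [S6.signVec_eq_svB]
    cases hs : s k <;> simp [S6.svB] <;> norm_num
  have hsnn : ∀ (F : Finset (Fin p → Bool)), 0 ≤ ∑ s ∈ F, π s :=
    fun F => Finset.sum_nonneg fun s _ => hπ0 s
  have ciIff : CIpair μ X i j ↔ β i j = 0 := by
    constructor
    · intro hCI
      set y0 : Fin p → Bool := fun _ => false with hy0
      have hagrIff : ∀ s : Fin p → Bool,
          (∀ k, k ≠ i → k ≠ j → signVec s k = signVec y0 k) ↔ S6.agr i j y0 s := by
        intro s
        constructor
        · intro h k hki hkj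
          have h2 := h k hki hkj
          rwa [S6.signVec_eq_svB, S6.signVec_eq_svB, S6.svB_inj_iff] at h2
        · intro h k hki hkj
          rw [S6.signVec_eq_svB, S6.signVec_eq_svB, h k hki hkj]
      have h := hCI 1 1 (signVec y0)
      have e1 : μ {ω | X ω i = 1 ∧ X ω j = 1 ∧ ∀ k, k ≠ i → k ≠ j → X ω k = signVec y0 k}
          = ENNReal.ofReal (∑ s ∈ S6.cfilter (fun s : Fin p → Bool =>
              signVec s i = 1 ∧ signVec s j = 1 ∧
                ∀ k, k ≠ i → k ≠ j → signVec s k = signVec y0 k), π s) :=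
        measμ (fun x => x i = 1 ∧ x j = 1 ∧ ∀ k, k ≠ i → k ≠ j → x k = signVec y0 k)
      have e0 : μ {ω | ∀ k, k ≠ i → k ≠ j → X ω k = signVec y0 k}
          = ENNReal.ofReal (∑ s ∈ S6.cfilter (fun s : Fin p → Bool =>
              ∀ k, k ≠ i → k ≠ j → signVec s k = signVec y0 k), π s) :=
        measμ (fun x => ∀ k, k ≠ i → k ≠ j → x k = signVec y0 k)
      have e2 : μ {ω | X ω i = 1 ∧ ∀ k, k ≠ i → k ≠ j → X ω k = signVec y0 k}
          = ENNReal.ofReal (∑ s ∈ S6.cfilter (fun s : Fin p → Bool =>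
              signVec s i = 1 ∧ ∀ k, k ≠ i → k ≠ j → signVec s k = signVec y0 k), π s) :=
        measμ (fun x => x i = 1 ∧ ∀ k, k ≠ i → k ≠ j → x k = signVec y0 k)
      have e3 : μ {ω | X ω j = 1 ∧ ∀ k, k ≠ i → k ≠ j → X ω k = signVec y0 k}
          = ENNReal.ofReal (∑ s ∈ S6.cfilter (fun s : Fin p → Bool =>
              signVec s j = 1 ∧ ∀ k, k ≠ i → k ≠ j → signVec s k = signVec y0 k), π s) :=
        measμ (fun x => x j = 1 ∧ ∀ k, k ≠ i → k ≠ j → x k = signVec y0 k)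
      rw [e1, e0, e2, e3, ← ENNReal.ofReal_mul (hsnn _), ← ENNReal.ofReal_mul (hsnn _),
        ENNReal.ofReal_eq_ofReal_iff (mul_nonneg (hsnn _) (hsnn _))
          (mul_nonneg (hsnn _) (hsnn _))] at h
      have hf1 : S6.cfilter (fun s : Fin p → Bool =>
            signVec s i = 1 ∧ signVec s j = 1 ∧
              ∀ k, k ≠ i → k ≠ j → signVec s k = signVec y0 k)
          = {S6.cl i j true true y0} := by
        rw [← S6.filter_ij i j hij true true y0]
        ext s
        rw [S6.mem_cfilter, S6.mem_cfilter, hsvT s i, hsvT s j, hagrIff s]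
      have hf0 : S6.cfilter (fun s : Fin p → Bool =>
            ∀ k, k ≠ i → k ≠ j → signVec s k = signVec y0 k)
          = S6.cfilter (fun s => S6.agr i j y0 s) := by
        ext s
        rw [S6.mem_cfilter, S6.mem_cfilter, hagrIff s]
      have hf2 : S6.cfilter (fun s : Fin p → Bool =>
            signVec s i = 1 ∧ ∀ k, k ≠ i → k ≠ j → signVec s k = signVec y0 k)
          = {S6.cl i j true true y0, S6.cl i j true false y0} := by
        rw [← S6.filter_i i j hij true y0]
        ext s
        rw [S6.mem_cfilter, S6.mem_cfilter, hsvT s i, hagrIff s]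
      have hf3 : S6.cfilter (fun s : Fin p → Bool =>
            signVec s j = 1 ∧ ∀ k, k ≠ i → k ≠ j → signVec s k = signVec y0 k)
          = {S6.cl i j true true y0, S6.cl i j false true y0} := by
        rw [← S6.filter_j i j hij true y0]
        ext s
        rw [S6.mem_cfilter, S6.mem_cfilter, hsvT s j, hagrIff s]
      rw [hf1, hf0, hf2, hf3, Finset.sum_singleton, S6.fiber_sum i j hij y0 π,
        Finset.sum_pair (S6.cl_ne_b i j hij true true true false y0 (by simp)),
        Finset.sum_pair (S6.cl_ne_a i j hij true true false true y0 (by simp))] at h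
      simp only [Fintype.sum_bool] at h
      have hid := hIid y0
      have hE0 : (Real.exp (4 * β i j) - 1)
          * (π (S6.cl i j true false y0) * π (S6.cl i j false true y0)) = 0 := by
        linear_combination h - hid
      have hBC : 0 < π (S6.cl i j true false y0) * π (S6.cl i j false true y0) :=
        mul_pos (hπpos _) (hπpos _)
      rcases mul_eq_zero.1 hE0 with hE | hC
      · have he1 : Real.exp (4 * β i j) = 1 := by linarith
        have h4 := (Real.exp_eq_one_iff _).1 he1
        linarith
      · exact absurd hC (ne_of_gt hBC)
    · intro ht a b z
      have hid : ∀ y, π (S6.cl i j true true y) * π (S6.cl i j false false y)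
          = π (S6.cl i j true false y) * π (S6.cl i j false true y) := by
        intro y
        have h := hIid y
        rw [ht] at h
        norm_num at h
        exact h
      have e1 : μ {ω | X ω i = a ∧ X ω j = b ∧ ∀ k, k ≠ i → k ≠ j → X ω k = z k}
          = ENNReal.ofReal (∑ s ∈ S6.cfilter (fun s : Fin p → Bool =>
              signVec s i = a ∧ signVec s j = b ∧
                ∀ k, k ≠ i → k ≠ j → signVec s k = z k), π s) :=
        measμ (fun x => x i = a ∧ x j = b ∧ ∀ k, k ≠ i → k ≠ j → x k = z k)
      have e0 : μ {ω | ∀ k, k ≠ i → k ≠ j → X ω k = z k}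
          = ENNReal.ofReal (∑ s ∈ S6.cfilter (fun s : Fin p → Bool =>
              ∀ k, k ≠ i → k ≠ j → signVec s k = z k), π s) :=
        measμ (fun x => ∀ k, k ≠ i → k ≠ j → x k = z k)
      have e2 : μ {ω | X ω i = a ∧ ∀ k, k ≠ i → k ≠ j → X ω k = z k}
          = ENNReal.ofReal (∑ s ∈ S6.cfilter (fun s : Fin p → Bool =>
              signVec s i = a ∧ ∀ k, k ≠ i → k ≠ j → signVec s k = z k), π s) :=
        measμ (fun x => x i = a ∧ ∀ k, k ≠ i → k ≠ j → x k = z k)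
      have e3 : μ {ω | X ω j = b ∧ ∀ k, k ≠ i → k ≠ j → X ω k = z k}
          = ENNReal.ofReal (∑ s ∈ S6.cfilter (fun s : Fin p → Bool =>
              signVec s j = b ∧ ∀ k, k ≠ i → k ≠ j → signVec s k = z k), π s) :=
        measμ (fun x => x j = b ∧ ∀ k, k ≠ i → k ≠ j → x k = z k)
      rw [e1, e0, e2, e3, ← ENNReal.ofReal_mul (hsnn _), ← ENNReal.ofReal_mul (hsnn _),
        ENNReal.ofReal_eq_ofReal_iff (mul_nonneg (hsnn _) (hsnn _))
          (mul_nonneg (hsnn _) (hsnn _))]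
      have hempty : ∀ (Q : (Fin p → Bool) → Prop) (k : Fin p),
          (∀ s, Q s → signVec s k = z k) → (z k ≠ 1 ∧ z k ≠ -1) → S6.cfilter Q = ∅ := by
        intro Q k hQ hzk
        rw [Finset.eq_empty_iff_forall_notMem]
        intro s hs
        have h2 := hQ s (S6.mem_cfilter.1 hs)
        rw [S6.signVec_eq_svB] at h2
        cases hsk : s k
        · rw [hsk] at h2
          exact hzk.2 (by rw [← h2]; simp [S6.svB])
        · rw [hsk] at h2
          exact hzk.1 (by rw [← h2]; simp [S6.svB])
      have hemptyA : ∀ (Q : (Fin p → Bool) → Prop),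
          (∀ s, Q s → signVec s i = a) → (a ≠ 1 ∧ a ≠ -1) → S6.cfilter Q = ∅ := by
        intro Q hQ hza
        rw [Finset.eq_empty_iff_forall_notMem]
        intro s hs
        have h2 := hQ s (S6.mem_cfilter.1 hs)
        rw [S6.signVec_eq_svB] at h2
        cases hsk : s i
        · rw [hsk] at h2
          exact hza.2 (by rw [← h2]; simp [S6.svB])
        · rw [hsk] at h2
          exact hza.1 (by rw [← h2]; simp [S6.svB])
      have hemptyB : ∀ (Q : (Fin p → Bool) → Prop),
          (∀ s, Q s → signVec s j = b) → (b ≠ 1 ∧ b ≠ -1) → S6.cfilter Q = ∅ := by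
        intro Q hQ hzb
        rw [Finset.eq_empty_iff_forall_notMem]
        intro s hs
        have h2 := hQ s (S6.mem_cfilter.1 hs)
        rw [S6.signVec_eq_svB] at h2
        cases hsk : s j
        · rw [hsk] at h2
          exact hzb.2 (by rw [← h2]; simp [S6.svB])
        · rw [hsk] at h2
          exact hzb.1 (by rw [← h2]; simp [S6.svB])
      by_cases hz : ∀ k, k ≠ i → k ≠ j → (z k = 1 ∨ z k = -1)
      · by_cases ha : a = 1 ∨ a = -1
        · by_cases hb : b = 1 ∨ b = -1
          · set y : Fin p → Bool := fun k => if z k = 1 then true else false with hy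
            have hzy : ∀ k, k ≠ i → k ≠ j → signVec y k = z k := by
              intro k hki hkj
              rcases hz k hki hkj with h1 | h1 <;> simp [hy, signVec, h1] <;> norm_num
            have hrest : ∀ s : Fin p → Bool,
                (∀ k, k ≠ i → k ≠ j → signVec s k = z k) ↔ S6.agr i j y s := by
              intro s
              constructor
              · intro h k hki hkj
                have h2 := h k hki hkj
                rw [← hzy k hki hkj] at h2
                rwa [S6.signVec_eq_svB, S6.signVec_eq_svB, S6.svB_inj_iff] at h2
              · intro h k hki hkj
                rw [← hzy k hki hkj, S6.signVec_eq_svB, S6.signVec_eq_svB, h k hki hkj]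
            have hf0 : S6.cfilter (fun s : Fin p → Bool =>
                  ∀ k, k ≠ i → k ≠ j → signVec s k = z k)
                = S6.cfilter (fun s => S6.agr i j y s) := by
              ext s
              rw [S6.mem_cfilter, S6.mem_cfilter, hrest s]
            obtain (rfl | rfl) := ha <;> obtain (rfl | rfl) := hb
            · have hf1 : S6.cfilter (fun s : Fin p → Bool =>
                    signVec s i = 1 ∧ signVec s j = 1 ∧
                      ∀ k, k ≠ i → k ≠ j → signVec s k = z k)
                  = {S6.cl i j true true y} := by
                rw [← S6.filter_ij i j hij true true y]
                ext s
                rw [S6.mem_cfilter, S6.mem_cfilter, hsvT s i, hsvT s j, hrest s]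
              have hf2 : S6.cfilter (fun s : Fin p → Bool =>
                    signVec s i = 1 ∧ ∀ k, k ≠ i → k ≠ j → signVec s k = z k)
                  = {S6.cl i j true true y, S6.cl i j true false y} := by
                rw [← S6.filter_i i j hij true y]
                ext s
                rw [S6.mem_cfilter, S6.mem_cfilter, hsvT s i, hrest s]
              have hf3 : S6.cfilter (fun s : Fin p → Bool =>
                    signVec s j = 1 ∧ ∀ k, k ≠ i → k ≠ j → signVec s k = z k)
                  = {S6.cl i j true true y, S6.cl i j false true y} := by
                rw [← S6.filter_j i j hij true y]
                ext s
                rw [S6.mem_cfilter, S6.mem_cfilter, hsvT s j, hrest s]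
              rw [hf1, hf0, hf2, hf3, Finset.sum_singleton, S6.fiber_sum i j hij y π,
                Finset.sum_pair (S6.cl_ne_b i j hij true true true false y (by simp)),
                Finset.sum_pair (S6.cl_ne_a i j hij true true false true y (by simp))]
              simp only [Fintype.sum_bool]
              linear_combination hid y
            · have hf1 : S6.cfilter (fun s : Fin p → Bool =>
                    signVec s i = 1 ∧ signVec s j = -1 ∧
                      ∀ k, k ≠ i → k ≠ j → signVec s k = z k)
                  = {S6.cl i j true false y} := by
                rw [← S6.filter_ij i j hij true false y]
                ext s
                rw [S6.mem_cfilter, S6.mem_cfilter, hsvT s i, hsvF s j, hrest s]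
              have hf2 : S6.cfilter (fun s : Fin p → Bool =>
                    signVec s i = 1 ∧ ∀ k, k ≠ i → k ≠ j → signVec s k = z k)
                  = {S6.cl i j true true y, S6.cl i j true false y} := by
                rw [← S6.filter_i i j hij true y]
                ext s
                rw [S6.mem_cfilter, S6.mem_cfilter, hsvT s i, hrest s]
              have hf3 : S6.cfilter (fun s : Fin p → Bool =>
                    signVec s j = -1 ∧ ∀ k, k ≠ i → k ≠ j → signVec s k = z k)
                  = {S6.cl i j true false y, S6.cl i j false false y} := by
                rw [← S6.filter_j i j hij false y]
                ext s
                rw [S6.mem_cfilter, S6.mem_cfilter, hsvF s j, hrest s]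
              rw [hf1, hf0, hf2, hf3, Finset.sum_singleton, S6.fiber_sum i j hij y π,
                Finset.sum_pair (S6.cl_ne_b i j hij true true true false y (by simp)),
                Finset.sum_pair (S6.cl_ne_a i j hij true false false false y (by simp))]
              simp only [Fintype.sum_bool]
              linear_combination (-1 : ℝ) * hid y
            · have hf1 : S6.cfilter (fun s : Fin p → Bool =>
                    signVec s i = -1 ∧ signVec s j = 1 ∧
                      ∀ k, k ≠ i → k ≠ j → signVec s k = z k)
                  = {S6.cl i j false true y} := by
                rw [← S6.filter_ij i j hij false true y]
                ext s
                rw [S6.mem_cfilter, S6.mem_cfilter, hsvF s i, hsvT s j, hrest s]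
              have hf2 : S6.cfilter (fun s : Fin p → Bool =>
                    signVec s i = -1 ∧ ∀ k, k ≠ i → k ≠ j → signVec s k = z k)
                  = {S6.cl i j false true y, S6.cl i j false false y} := by
                rw [← S6.filter_i i j hij false y]
                ext s
                rw [S6.mem_cfilter, S6.mem_cfilter, hsvF s i, hrest s]
              have hf3 : S6.cfilter (fun s : Fin p → Bool =>
                    signVec s j = 1 ∧ ∀ k, k ≠ i → k ≠ j → signVec s k = z k)
                  = {S6.cl i j true true y, S6.cl i j false true y} := by
                rw [← S6.filter_j i j hij true y]
                ext s
                rw [S6.mem_cfilter, S6.mem_cfilter, hsvT s j, hrest s]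
              rw [hf1, hf0, hf2, hf3, Finset.sum_singleton, S6.fiber_sum i j hij y π,
                Finset.sum_pair (S6.cl_ne_b i j hij false true false false y (by simp)),
                Finset.sum_pair (S6.cl_ne_a i j hij true true false true y (by simp))]
              simp only [Fintype.sum_bool]
              linear_combination (-1 : ℝ) * hid y
            · have hf1 : S6.cfilter (fun s : Fin p → Bool =>
                    signVec s i = -1 ∧ signVec s j = -1 ∧
                      ∀ k, k ≠ i → k ≠ j → signVec s k = z k)
                  = {S6.cl i j false false y} := by
                rw [← S6.filter_ij i j hij false false y]
                ext s
                rw [S6.mem_cfilter, S6.mem_cfilter, hsvF s i, hsvF s j, hrest s]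
              have hf2 : S6.cfilter (fun s : Fin p → Bool =>
                    signVec s i = -1 ∧ ∀ k, k ≠ i → k ≠ j → signVec s k = z k)
                  = {S6.cl i j false true y, S6.cl i j false false y} := by
                rw [← S6.filter_i i j hij false y]
                ext s
                rw [S6.mem_cfilter, S6.mem_cfilter, hsvF s i, hrest s]
              have hf3 : S6.cfilter (fun s : Fin p → Bool =>
                    signVec s j = -1 ∧ ∀ k, k ≠ i → k ≠ j → signVec s k = z k)
                  = {S6.cl i j true false y, S6.cl i j false false y} := by
                rw [← S6.filter_j i j hij false y]
                ext s
                rw [S6.mem_cfilter, S6.mem_cfilter, hsvF s j, hrest s]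
              rw [hf1, hf0, hf2, hf3, Finset.sum_singleton, S6.fiber_sum i j hij y π,
                Finset.sum_pair (S6.cl_ne_b i j hij false true false false y (by simp)),
                Finset.sum_pair (S6.cl_ne_a i j hij true false false false y (by simp))]
              simp only [Fintype.sum_bool]
              linear_combination hid y
          · push_neg at hb
            rw [hemptyB (fun s : Fin p → Bool => signVec s i = a ∧ signVec s j = b ∧
                  ∀ k, k ≠ i → k ≠ j → signVec s k = z k) (fun s h => h.2.1) hb,
              hemptyB (fun s : Fin p → Bool => signVec s j = b ∧
                  ∀ k, k ≠ i → k ≠ j → signVec s k = z k) (fun s h => h.1) hb]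
            simp
        · push_neg at ha
          rw [hemptyA (fun s : Fin p → Bool => signVec s i = a ∧ signVec s j = b ∧
                ∀ k, k ≠ i → k ≠ j → signVec s k = z k) (fun s h => h.1) ha,
            hemptyA (fun s : Fin p → Bool => signVec s i = a ∧
                ∀ k, k ≠ i → k ≠ j → signVec s k = z k) (fun s h => h.1) ha]
          simp
      · push_neg at hz
        obtain ⟨k, hki, hkj, hzk⟩ := hz
        rw [hempty (fun s : Fin p → Bool => signVec s i = a ∧ signVec s j = b ∧
              ∀ k, k ≠ i → k ≠ j → signVec s k = z k) k (fun s h => h.2.2 k hki hkj) hzk,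
          hempty (fun s : Fin p → Bool =>
              ∀ k, k ≠ i → k ≠ j → signVec s k = z k) k (fun s h => h k hki hkj) hzk,
          hempty (fun s : Fin p → Bool => signVec s i = a ∧
              ∀ k, k ≠ i → k ≠ j → signVec s k = z k) k (fun s h => h.2 k hki hkj) hzk]
        simp
  have hm : ∀ k, expec μ (fun ω => X ω k) = m k := fun k => rfl
  have aciIff : ACI μ X {i} {j} ({i, j}ᶜ : Set (Fin p)) ↔ β i j = 0 := by
    constructor
    · intro hACI
      set f : Ω → ℝ := fun ω => (X ω i - m i) - ∑ d, ξ d * (X ω d - m d) with hfdef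
      have hfpt : ∀ ω, f ω
          = (fun x : Fin p → ℝ => (x i - m i) - ∑ d, ξ d * (x d - m d)) (X ω) := fun ω => rfl
      have hfmem : f ∈ addSpace μ X ({i} ∪ ({i, j}ᶜ : Set (Fin p))) := by
        rw [S6.addSpace_char μ X hmeas hpm m hm]
        have h1 : (fun ω => X ω i - m i) ∈ Submodule.span ℝ
            ((fun k => (fun ω => X ω k - m k)) '' ({i} ∪ ({i, j}ᶜ : Set (Fin p)))) :=
          Submodule.subset_span ⟨i, Or.inl rfl, rfl⟩
        have h2 : (fun ω => ∑ d, ξ d * (X ω d - m d)) ∈ Submodule.span ℝ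
            ((fun k => (fun ω => X ω k - m k)) '' ({i} ∪ ({i, j}ᶜ : Set (Fin p)))) := by
          have he : (fun ω => ∑ d, ξ d * (X ω d - m d))
              = ∑ d : Fin p, ξ d • (fun ω => X ω d - m d) := by
            funext ω
            rw [Finset.sum_apply]
            exact Finset.sum_congr rfl fun d _ => rfl
          rw [he]
          refine Submodule.sum_mem _ fun d _ => ?_
          by_cases hd : d ∈ ({i, j}ᶜ : Set (Fin p))
          · exact Submodule.smul_mem _ _ (Submodule.subset_span ⟨d, Or.inr hd, rfl⟩)
          · rw [hξ0 d hd, zero_smul]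
            exact Submodule.zero_mem _
        have he2 : f = (fun ω => X ω i - m i) - (fun ω => ∑ d, ξ d * (X ω d - m d)) := rfl
        rw [he2]
        exact Submodule.sub_mem _ h1 h2
      have hforthf : ∀ h ∈ addSpace μ X ({i, j}ᶜ : Set (Fin p)),
          expec μ (fun ω => f ω * h ω) = 0 := by
        intro h hh
        obtain ⟨n, c, k, hkC, hhpt⟩ := S6.mem_decomp μ X hmeas hpm m hm _ h hh
        rw [bridge f h (fun x => (x i - m i) - ∑ d, ξ d * (x d - m d))
          (fun x => ∑ κ, c κ * (x (k κ) - m (k κ))) hfpt hhpt]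
        show S6.ipW π (fun s => (signVec s i - m i) - ∑ d, ξ d * (signVec s d - m d))
          (fun s => ∑ κ, c κ * (signVec s (k κ) - m (k κ))) = 0
        rw [S6.ipW_sumR]
        refine Finset.sum_eq_zero fun κ _ => ?_
        have hk := (hCmem (k κ)).1 (hkC κ)
        exact mul_eq_zero_of_right _ (orthLCM (k κ) hk.1 hk.2)
      set emL : ((Fin p → Bool) → ℝ) →ₗ[ℝ] EuclideanSpace ℝ (Fin p → Bool) :=
        { toFun := fun u => WithLp.toLp 2 (fun s => u s * Real.sqrt (π s)),
          map_add' := by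
            intro u v
            ext s
            simp only [PiLp.toLp_apply, PiLp.add_apply, Pi.add_apply]
            ring,
          map_smul' := by
            intro c u
            ext s
            simp only [PiLp.toLp_apply, PiLp.smul_apply, Pi.smul_apply, smul_eq_mul, RingHom.id_apply]
            ring } with hemdef
      have hinner : ∀ u v : (Fin p → Bool) → ℝ,
          (inner ℝ (emL u) (emL v) : ℝ) = S6.ipW π u v := by
        intro u v
        rw [PiLp.inner_apply]
        refine Finset.sum_congr rfl fun s _ => ?_
        rw [Real.inner_apply]
        show (u s * Real.sqrt (π s)) * (v s * Real.sqrt (π s)) = _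
        rw [show (u s * Real.sqrt (π s)) * (v s * Real.sqrt (π s))
          = (u s * v s) * (Real.sqrt (π s) * Real.sqrt (π s)) from by ring,
          Real.mul_self_sqrt (le_of_lt (hπpos s))]
      set W : Submodule ℝ (EuclideanSpace ℝ (Fin p → Bool)) :=
        Submodule.span ℝ
          ((fun l => emL (fun s => signVec s l - m l)) '' ({i, j}ᶜ : Set (Fin p))) with hWdef
      have hv0mem : (W.orthogonalProjectionOnto (emL (fun s => signVec s j - m j))
          : EuclideanSpace ℝ (Fin p → Bool)) ∈ W := SetLike.coe_mem _
      have hres : emL (fun s => signVec s j - m j)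
          - W.orthogonalProjectionOnto (emL (fun s => signVec s j - m j)) ∈ Wᗮ :=
        W.sub_starProjection_mem_orthogonal _
      rw [hWdef] at hv0mem
      obtain ⟨n, c, gg, hgg⟩ := Submodule.mem_span_set'.1 hv0mem
      have himg : ∀ κ : Fin n, ∃ l, l ∈ ({i, j}ᶜ : Set (Fin p)) ∧
          emL (fun s => signVec s l - m l) = (gg κ : EuclideanSpace ℝ (Fin p → Bool)) := by
        intro κ
        obtain ⟨l, hl, he⟩ := (gg κ).2
        exact ⟨l, hl, he⟩
      choose lk hlkC hlkE using himg
      have hgr : (fun s => ∑ κ, c κ * (signVec s (lk κ) - m (lk κ)))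
          = ∑ κ : Fin n, c κ • (fun s => signVec s (lk κ) - m (lk κ)) := by
        funext s
        rw [Finset.sum_apply]
        exact Finset.sum_congr rfl fun κ _ => rfl
      have hemgr : emL (fun s => ∑ κ, c κ * (signVec s (lk κ) - m (lk κ)))
          = (W.orthogonalProjectionOnto (emL (fun s => signVec s j - m j))
            : EuclideanSpace ℝ (Fin p → Bool)) := by
        rw [hgr, map_sum, ← hgg]
        refine Finset.sum_congr rfl fun κ _ => ?_
        rw [_root_.map_smul, hlkE κ]
      have hresid : ∀ l, l ≠ i → l ≠ j →
          S6.ipW π (fun s => (signVec s j - m j) - ∑ κ, c κ * (signVec s (lk κ) - m (lk κ)))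
            (fun s => signVec s l - m l) = 0 := by
        intro l hli hlj
        have hWl : emL (fun s => signVec s l - m l) ∈ W := by
          rw [hWdef]
          exact Submodule.subset_span ⟨l, (hCmem l).2 ⟨hli, hlj⟩, rfl⟩
        have hsub : emL (fun s => (signVec s j - m j)
              - ∑ κ, c κ * (signVec s (lk κ) - m (lk κ)))
            = emL (fun s => signVec s j - m j)
              - emL (fun s => ∑ κ, c κ * (signVec s (lk κ) - m (lk κ))) := by
          rw [← map_sub]
          rfl
        have h0 : (inner ℝ (emL (fun s => signVec s l - m l))
            (emL (fun s => (signVec s j - m j) - ∑ κ, c κ * (signVec s (lk κ) - m (lk κ))))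
            : ℝ) = 0 := by
          rw [hsub, hemgr]
          exact (Submodule.mem_orthogonal W _).1 hres _ hWl
        rw [← hinner, real_inner_comm]
        exact h0
      set g : Ω → ℝ := fun ω => (X ω j - m j) - ∑ κ, c κ * (X ω (lk κ) - m (lk κ)) with hgdef
      have hgpt : ∀ ω, g ω = (fun x : Fin p → ℝ =>
          (x j - m j) - ∑ κ, c κ * (x (lk κ) - m (lk κ))) (X ω) := fun ω => rfl
      have hgmem : g ∈ addSpace μ X ({j} ∪ ({i, j}ᶜ : Set (Fin p))) := by
        rw [S6.addSpace_char μ X hmeas hpm m hm]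
        have h1 : (fun ω => X ω j - m j) ∈ Submodule.span ℝ
            ((fun k => (fun ω => X ω k - m k)) '' ({j} ∪ ({i, j}ᶜ : Set (Fin p)))) :=
          Submodule.subset_span ⟨j, Or.inl rfl, rfl⟩
        have h2 : (fun ω => ∑ κ, c κ * (X ω (lk κ) - m (lk κ))) ∈ Submodule.span ℝ
            ((fun k => (fun ω => X ω k - m k)) '' ({j} ∪ ({i, j}ᶜ : Set (Fin p)))) := by
          have he : (fun ω => ∑ κ, c κ * (X ω (lk κ) - m (lk κ)))
              = ∑ κ : Fin n, c κ • (fun ω => X ω (lk κ) - m (lk κ)) := by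
            funext ω
            rw [Finset.sum_apply]
            exact Finset.sum_congr rfl fun κ _ => rfl
          rw [he]
          exact Submodule.sum_mem _ fun κ _ =>
            Submodule.smul_mem _ _ (Submodule.subset_span ⟨lk κ, Or.inr (hlkC κ), rfl⟩)
        have he2 : g = (fun ω => X ω j - m j)
            - (fun ω => ∑ κ, c κ * (X ω (lk κ) - m (lk κ))) := rfl
        rw [he2]
        exact Submodule.sub_mem _ h1 h2
      have hgorth : ∀ h ∈ addSpace μ X ({i, j}ᶜ : Set (Fin p)),
          expec μ (fun ω => g ω * h ω) = 0 := by
        intro h hh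
        obtain ⟨n2, c2, k2, hk2C, hh2⟩ := S6.mem_decomp μ X hmeas hpm m hm _ h hh
        rw [bridge g h (fun x => (x j - m j) - ∑ κ, c κ * (x (lk κ) - m (lk κ)))
          (fun x => ∑ κ, c2 κ * (x (k2 κ) - m (k2 κ))) hgpt hh2]
        show S6.ipW π (fun s => (signVec s j - m j) - ∑ κ, c κ * (signVec s (lk κ) - m (lk κ)))
          (fun s => ∑ κ, c2 κ * (signVec s (k2 κ) - m (k2 κ))) = 0
        rw [S6.ipW_sumR]
        refine Finset.sum_eq_zero fun κ _ => ?_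
        have hk := (hCmem (k2 κ)).1 (hk2C κ)
        exact mul_eq_zero_of_right _ (hresid (k2 κ) hk.1 hk.2)
      have hfg := hACI f hfmem hforthf g hgmem hgorth
      rw [bridge f g (fun x => (x i - m i) - ∑ d, ξ d * (x d - m d))
        (fun x => (x j - m j) - ∑ κ, c κ * (x (lk κ) - m (lk κ))) hfpt hgpt] at hfg
      have hfg2 : S6.ipW π (fun s => (signVec s i - m i) - ∑ d, ξ d * (signVec s d - m d))
          (fun s => (signVec s j - m j)
            - ∑ κ, c κ * (signVec s (lk κ) - m (lk κ))) = 0 := hfg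
      rw [S6.ipW_subR, S6.ipW_sumR] at hfg2
      have hz2 : (∑ κ, c κ * S6.ipW π
          (fun s => (signVec s i - m i) - ∑ d, ξ d * (signVec s d - m d))
          (fun s => signVec s (lk κ) - m (lk κ))) = 0 :=
        Finset.sum_eq_zero fun κ _ => by
          have hk := (hCmem (lk κ)).1 (hlkC κ)
          exact mul_eq_zero_of_right _ (orthLCM (lk κ) hk.1 hk.2)
      rw [hz2, sub_zero] at hfg2
      exact hΔiff.1 hfg2
    · intro ht
      have hΔ0 : Δ = 0 := hΔiff.2 ht
      intro f hf hforth g hg hgorth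
      obtain ⟨nf, cf, kf, hkf, hfpt⟩ := S6.mem_decomp μ X hmeas hpm m hm _ f hf
      obtain ⟨ng, cg, kg, hkg, hgpt⟩ := S6.mem_decomp μ X hmeas hpm m hm _ g hg
      rw [bridge f g (fun x => ∑ ι, cf ι * (x (kf ι) - m (kf ι)))
        (fun x => ∑ κ, cg κ * (x (kg κ) - m (kg κ))) hfpt hgpt]
      show S6.ipW π (fun s => ∑ ι, cf ι * (signVec s (kf ι) - m (kf ι)))
        (fun s => ∑ κ, cg κ * (signVec s (kg κ) - m (kg κ))) = 0
      rw [S6.ipW_sumR]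
      have hfC : ∀ l, l ≠ i → l ≠ j →
          S6.ipW π (fun s => ∑ ι, cf ι * (signVec s (kf ι) - m (kf ι)))
            (fun s => signVec s l - m l) = 0 := by
        intro l hli hlj
        have h2 := hforth (fun ω => X ω l - m l)
          (S6.Xc_mem μ X hmeas hpm m hm _ l ((hCmem l).2 ⟨hli, hlj⟩))
        rw [bridge f (fun ω => X ω l - m l) (fun x => ∑ ι, cf ι * (x (kf ι) - m (kf ι)))
          (fun x => x l - m l) hfpt (fun ω => rfl)] at h2
        exact h2
      set a : ℝ := ∑ ι, (if kf ι = i then cf ι else 0) with hadef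
      set rst : (Fin p → Bool) → ℝ :=
        fun s => ∑ ι, (if kf ι = i then 0 else cf ι) * (signVec s (kf ι) - m (kf ι))
        with hrstdef
      have hdecomp : ∀ s, (∑ ι, cf ι * (signVec s (kf ι) - m (kf ι)))
          = a * ((signVec s i - m i) - ℓ s) + (a * ℓ s + rst s) := by
        intro s
        have h1 : (∑ ι, cf ι * (signVec s (kf ι) - m (kf ι)))
            = a * (signVec s i - m i) + rst s := by
          rw [hadef, hrstdef, Finset.sum_mul, ← Finset.sum_add_distrib]
          refine Finset.sum_congr rfl fun ι _ => ?_
          by_cases hι : kf ι = i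
          · rw [hι]
            simp
          · simp [hι]
        rw [h1]
        ring
      set qh : (Fin p → Bool) → ℝ := fun s => a * ℓ s + rst s with hqhdef
      have hqC : ∀ l, l ≠ i → l ≠ j →
          S6.ipW π qh (fun s => signVec s l - m l) = 0 := by
        intro l hli hlj
        have h1 := hfC l hli hlj
        have h2 := orthLCM l hli hlj
        have h3 : S6.ipW π (fun s => ∑ ι, cf ι * (signVec s (kf ι) - m (kf ι)))
            (fun s => signVec s l - m l)
            = a * S6.ipW π (fun s => (signVec s i - m i) - ℓ s) (fun s => signVec s l - m l)
              + S6.ipW π qh (fun s => signVec s l - m l) := by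
          rw [S6.ipW_congrL π hdecomp, S6.ipW_addL, S6.ipW_smulL]
        rw [h1, h2] at h3
        linarith [h3]
      have hqq : S6.ipW π qh qh = 0 := by
        have e1 : S6.ipW π qh qh = a * S6.ipW π ℓ qh + S6.ipW π rst qh := by
          rw [show S6.ipW π qh qh = S6.ipW π (fun s => a * ℓ s + rst s) qh from rfl,
            S6.ipW_addL, S6.ipW_smulL]
        have e2 : S6.ipW π ℓ qh
            = ∑ d : Fin p, ξ d * S6.ipW π (fun s => signVec s d - m d) qh :=
          S6.ipW_sumL π ξ (fun d s => signVec s d - m d) qh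
        have e3 : ∀ d : Fin p, ξ d * S6.ipW π (fun s => signVec s d - m d) qh = 0 := by
          intro d
          by_cases hd : d ∈ ({i, j}ᶜ : Set (Fin p))
          · have hk := (hCmem d).1 hd
            rw [S6.ipW_comm]
            exact mul_eq_zero_of_right _ (hqC d hk.1 hk.2)
          · rw [hξ0 d hd, zero_mul]
        have e4 : S6.ipW π rst qh = 0 := by
          rw [show S6.ipW π rst qh = S6.ipW π (fun s => ∑ ι, (if kf ι = i then 0 else cf ι)
              * (signVec s (kf ι) - m (kf ι))) qh from rfl,
            S6.ipW_sumL π _ (fun ι s => signVec s (kf ι) - m (kf ι)) qh]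
          refine Finset.sum_eq_zero fun ι _ => ?_
          by_cases hι : kf ι = i
          · rw [if_pos hι, zero_mul]
          · have hkC : kf ι ∈ ({i, j}ᶜ : Set (Fin p)) := by
              rcases hkf ι with h | h
              · exact absurd (Set.mem_singleton_iff.1 h) hι
              · exact h
            have hk := (hCmem _).1 hkC
            rw [if_neg hι, S6.ipW_comm]
            exact mul_eq_zero_of_right _ (hqC _ hk.1 hk.2)
        rw [e1, e2, Finset.sum_eq_zero fun d _ => e3 d, e4]
        ring
      have hq0 : ∀ s, qh s = 0 := by
        have hqq' : (∑ s : Fin p → Bool, (qh s * qh s) * π s) = 0 := hqq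
        have h4 := (Finset.sum_eq_zero_iff_of_nonneg fun s _ =>
          mul_nonneg (mul_self_nonneg (qh s)) (hπ0 s)).1 hqq'
        intro s
        have h5 := h4 s (Finset.mem_univ s)
        rcases mul_eq_zero.1 h5 with h6 | h6
        · exact mul_self_eq_zero.1 h6
        · exact absurd h6 (ne_of_gt (hπpos s))
      have hP : S6.ipW π (fun s => ∑ ι, cf ι * (signVec s (kf ι) - m (kf ι)))
          (fun s => signVec s j - m j) = a * Δ := by
        have h3 : S6.ipW π (fun s => ∑ ι, cf ι * (signVec s (kf ι) - m (kf ι)))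
            (fun s => signVec s j - m j)
            = a * S6.ipW π (fun s => (signVec s i - m i) - ℓ s) (fun s => signVec s j - m j)
              + S6.ipW π qh (fun s => signVec s j - m j) := by
          rw [S6.ipW_congrL π hdecomp, S6.ipW_addL, S6.ipW_smulL]
        have h4 : S6.ipW π qh (fun s => signVec s j - m j) = 0 :=
          Finset.sum_eq_zero fun s _ => by rw [hq0 s]; ring
        rw [h3, h4, add_zero, hΔdef]
      refine Finset.sum_eq_zero fun κ _ => ?_
      by_cases hkj : kg κ = j
      · rw [hkj, hP, hΔ0]
        ring
      · have hkC : kg κ ∈ ({i, j}ᶜ : Set (Fin p)) := by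
          rcases hkg κ with h | h
          · exact absurd (Set.mem_singleton_iff.1 h) hkj
          · exact h
        have hk := (hCmem _).1 hkC
        exact mul_eq_zero_of_right _ (hfC (kg κ) hk.1 hk.2)

  rw [ciIff, aciIff]
end
end

section
/- Let X_1,...,X_n be i.i.d. copies of a random vector X ∈ {0,1,...,m}^p, let W_k ∈ ℝ^{mp} be the stacked indicator vector W_k = (V(X_k^1)ᵀ,...,V(X_k^p)ᵀ)ᵀ with V(x) = (1_{{1}}(x),...,1_{{m}}(x)), let Σ̂ = (1/n) Σ_{k=1}^n (W_k − W̄)(W_k − W̄)ᵀ be the sample covariance matrix (W̄ the sample mean), and let Σ be the covariance matrix of W_1. Then for any constant τ > 2, with probability at least 1 − 1/p^{τ−2}, the entrywise maximum norm satisfies ‖Σ̂ − Σ‖_∞ ≤ (3/√2) · √((log(6m²) + τ log p)/n). -/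
open MeasureTheory

noncomputable section

/-- The sample covariance matrix of an `ℝ^q`-valued sample `W_1, …, W_n`:
`Σ̂ = n⁻¹ Σ_k (W_k − W̄)(W_k − W̄)ᵀ`. -/
def sampleCov {Ω : Type*} {q : Type*} [Fintype q] (n : ℕ)
    (W : Ω → q → ℝ) (ωs : Fin n → Ω) : Matrix q q ℝ :=
  fun z w => (1 / (n : ℝ)) * ∑ k : Fin n,
    (W (ωs k) z - (1 / (n : ℝ)) * ∑ l : Fin n, W (ωs l) z) *
    (W (ωs k) w - (1 / (n : ℝ)) * ∑ l : Fin n, W (ωs l) w)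

section Helpers
open Real


lemma hoeff_aux {p t : ℝ} (hp0 : 0 ≤ p) (hp1 : p ≤ 1) (ht : 0 ≤ t) :
    (1 - p + p * exp t) * exp (-(t * p)) ≤ exp (t ^ 2 / 8) := by
  set D : ℝ → ℝ := fun x => 1 - p + p * exp x with hDdef
  have hD : ∀ x, 0 < D x := by
    intro x
    rcases eq_or_lt_of_le hp0 with h | h
    · simp [hDdef, ← h]
    · have := exp_pos x
      have : 0 < p * exp x := mul_pos h this
      simp only [hDdef]; linarith
  have hDD : ∀ x, HasDerivAt D (p * exp x) x := fun x =>
    ((Real.hasDerivAt_exp x).const_mul p).const_add (1 - p)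
  set g1 : ℝ → ℝ := fun x => p + x / 4 - p * exp x / D x with hg1def
  have hg1 : ∀ x, HasDerivAt g1
      (1 / 4 - (p * exp x * D x - p * exp x * (p * exp x)) / (D x) ^ 2) x := by
    intro x
    have h1 : HasDerivAt (fun x : ℝ => p + x / 4) (1 / 4) x := by
      simpa using ((hasDerivAt_id x).div_const 4).const_add p
    have h2 : HasDerivAt (fun x => p * exp x / D x)
        ((p * exp x * D x - p * exp x * (p * exp x)) / (D x) ^ 2) x :=
      ((Real.hasDerivAt_exp x).const_mul p).div (hDD x) (hD x).ne'
    exact h1.sub h2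
  have hg1deriv_nonneg : ∀ x,
      0 ≤ 1 / 4 - (p * exp x * D x - p * exp x * (p * exp x)) / (D x) ^ 2 := by
    intro x
    have key : ∀ u d : ℝ, 0 < d → 0 ≤ u → u ≤ d → (u * d - u * u) / d ^ 2 ≤ 1 / 4 := by
      intro u d hd hu hud
      rw [div_le_iff₀ (by positivity)]
      nlinarith [sq_nonneg (d - 2 * u)]
    have hu0 : 0 ≤ p * exp x := mul_nonneg hp0 (exp_pos x).le
    have huD : p * exp x ≤ D x := by simp only [hDdef]; linarith
    rw [sub_nonneg]
    exact key _ _ (hD x) hu0 huD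
  have hg1mono : MonotoneOn g1 (Set.Ici (0:ℝ)) := by
    apply monotoneOn_of_deriv_nonneg (convex_Ici 0)
      (fun x _ => (hg1 x).differentiableAt.continuousAt.continuousWithinAt)
      (fun x _ => (hg1 x).differentiableAt.differentiableWithinAt)
    intro x _
    rw [(hg1 x).deriv]
    exact hg1deriv_nonneg x
  have hg10 : g1 0 = 0 := by simp [hg1def, hDdef]
  have hg1nonneg : ∀ x, 0 ≤ x → 0 ≤ g1 x := by
    intro x hx
    rw [← hg10]
    exact hg1mono (Set.self_mem_Ici) hx hx
  set g : ℝ → ℝ := fun x => p * x + x ^ 2 / 8 - log (D x) with hgdef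
  have hg : ∀ x, HasDerivAt g (g1 x) x := by
    intro x
    have h1 : HasDerivAt (fun x : ℝ => p * x + x ^ 2 / 8) (p + 2 * x ^ 1 / 8) x :=
      (((hasDerivAt_id x).const_mul p).congr_deriv (mul_one p)).add
        ((hasDerivAt_pow 2 x).div_const 8)
    have h2 : HasDerivAt (fun x => log (D x)) (p * exp x / D x) x :=
      (hDD x).log (hD x).ne'
    have := h1.sub h2
    refine this.congr_deriv ?_
    rw [hg1def]; ring
  have hgmono : MonotoneOn g (Set.Ici (0:ℝ)) := by
    apply monotoneOn_of_deriv_nonneg (convex_Ici 0)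
      (fun x _ => (hg x).differentiableAt.continuousAt.continuousWithinAt)
      (fun x _ => (hg x).differentiableAt.differentiableWithinAt)
    intro x hx
    rw [(hg x).deriv]
    exact hg1nonneg x (le_of_lt (by simpa using hx))
  have hg0 : g 0 = 0 := by simp [hgdef, hDdef]
  have hgt : 0 ≤ g t := by rw [← hg0]; exact hgmono Set.self_mem_Ici ht ht
  have hlog : log (D t) ≤ p * t + t ^ 2 / 8 := by
    simp only [hgdef] at hgt; linarith
  have hDle : D t ≤ exp (p * t + t ^ 2 / 8) := (log_le_iff_le_exp (hD t)).mp hlog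
  calc (1 - p + p * exp t) * exp (-(t * p)) = D t * exp (-(t * p)) := rfl
    _ ≤ exp (p * t + t ^ 2 / 8) * exp (-(t * p)) :=
        mul_le_mul_of_nonneg_right hDle (exp_pos _).le
    _ = exp (t ^ 2 / 8) := by rw [← exp_add]; ring_nf

open MeasureTheory

lemma int_of_bdd {Ω : Type*} [MeasurableSpace Ω] (μ : Measure Ω) [IsFiniteMeasure μ]
    {f : Ω → ℝ} (hf : Measurable f) {C : ℝ} (hC : ∀ ω, |f ω| ≤ C) : Integrable f μ :=
  (integrable_const C).mono' hf.aestronglyMeasurable (ae_of_all _ fun ω => by simpa using hC ω)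

lemma mgf_step {Ω : Type*} [MeasurableSpace Ω] (μ : Measure Ω) [IsProbabilityMeasure μ]
    (Y : Ω → ℝ) (hY : Measurable Y) (h0 : ∀ ω, 0 ≤ Y ω) (h1 : ∀ ω, Y ω ≤ 1)
    (l : ℝ) (hl : 0 ≤ l) :
    ∫ ω, exp (l * (Y ω - ∫ ω', Y ω' ∂μ)) ∂μ ≤ exp (l ^ 2 / 8) := by
  have hYint : Integrable Y μ := int_of_bdd μ hY (C := 1) (fun ω => abs_le.mpr ⟨by linarith [h0 ω], h1 ω⟩)
  set Ey := ∫ ω', Y ω' ∂μ with hEy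
  have hE0 : 0 ≤ Ey := integral_nonneg h0
  have hE1 : Ey ≤ 1 := by
    calc Ey ≤ ∫ _ω, (1:ℝ) ∂μ := integral_mono hYint (integrable_const 1) h1
      _ = 1 := by simp
  -- pointwise convexity bound
  have hconv : ∀ ω, exp (l * Y ω) ≤ 1 - Y ω + Y ω * exp l := by
    intro ω
    have := convexOn_exp.2 (Set.mem_univ (0:ℝ)) (Set.mem_univ l)
      (by linarith [h1 ω] : (0:ℝ) ≤ 1 - Y ω) (h0 ω) (by ring)
    simpa [mul_comm] using this
  have hexpint : Integrable (fun ω => exp (l * Y ω)) μ := by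
    apply int_of_bdd μ (by fun_prop) (C := exp l)
    intro ω
    rw [abs_of_nonneg (exp_pos _).le]
    exact exp_le_exp.mpr (by nlinarith [h0 ω, h1 ω])
  have hIle : ∫ ω, exp (l * Y ω) ∂μ ≤ 1 - Ey + Ey * exp l := by
    have h2 : Integrable (fun ω => 1 + Y ω * (exp l - 1)) μ :=
      (integrable_const 1).add (hYint.mul_const _)
    have heq : ∫ ω, (1 + Y ω * (exp l - 1)) ∂μ = 1 + Ey * (exp l - 1) := by
      have := integral_add (μ := μ) (integrable_const (1:ℝ)) (hYint.mul_const (exp l - 1))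
      simpa [integral_mul_const] using this
    have hle : ∫ ω, exp (l * Y ω) ∂μ ≤ ∫ ω, (1 + Y ω * (exp l - 1)) ∂μ :=
      integral_mono hexpint h2 (fun ω => by have := hconv ω; linarith [hconv ω])
    rw [heq] at hle
    linarith
  have hsplit : ∀ ω, exp (l * (Y ω - Ey)) = exp (l * Y ω) * exp (-(l * Ey)) := by
    intro ω; rw [← exp_add]; ring_nf
  calc ∫ ω, exp (l * (Y ω - Ey)) ∂μ
      = (∫ ω, exp (l * Y ω) ∂μ) * exp (-(l * Ey)) := by
        simp_rw [hsplit]; rw [integral_mul_const]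
    _ ≤ (1 - Ey + Ey * exp l) * exp (-(l * Ey)) :=
        mul_le_mul_of_nonneg_right hIle (exp_pos _).le
    _ ≤ exp (l ^ 2 / 8) := hoeff_aux hE0 hE1 hl

open ProbabilityTheory in
lemma tail_bound {Ω : Type*} [MeasurableSpace Ω] (μ : Measure Ω) [IsProbabilityMeasure μ]
    (n : ℕ) (Y : Ω → ℝ) (hY : Measurable Y) (h0 : ∀ ω, 0 ≤ Y ω) (h1 : ∀ ω, Y ω ≤ 1)
    (s : ℝ) (hs : 0 ≤ s) :
    Measure.pi (fun _ : Fin n => μ)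
      {ωs | (n : ℝ) * s ≤ ∑ k : Fin n, (Y (ωs k) - ∫ ω', Y ω' ∂μ)} ≤
      ENNReal.ofReal (Real.exp (-(2 * n * s ^ 2))) := by
  classical
  letI : MeasureSpace Ω := ⟨μ⟩
  have hvol : (volume : Measure (Fin n → Ω)) = Measure.pi (fun _ : Fin n => μ) :=
    MeasureTheory.volume_pi
  set Ey := ∫ ω', Y ω' ∂μ with hEy
  have hE0 : 0 ≤ Ey := integral_nonneg h0
  have hE1 : Ey ≤ 1 := by
    have := integral_mono (int_of_bdd μ hY (C := 1)
      (fun ω => abs_le.mpr ⟨by linarith [h0 ω], h1 ω⟩)) (integrable_const 1) h1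
    simpa using this
  set T : (Fin n → Ω) → ℝ := fun ωs => ∑ k : Fin n, (Y (ωs k) - Ey) with hT
  have hTmeas : Measurable T := by
    apply Finset.measurable_sum
    intro k _
    exact (hY.comp (measurable_pi_apply k)).sub measurable_const
  have hTbdd : ∀ ωs, |T ωs| ≤ n := by
    intro ωs
    calc |T ωs| ≤ ∑ k : Fin n, |Y (ωs k) - Ey| := Finset.abs_sum_le_sum_abs _ _
      _ ≤ ∑ _k : Fin n, (1:ℝ) := Finset.sum_le_sum (fun k _ =>
          abs_le.mpr ⟨by linarith [h0 (ωs k)], by linarith [h1 (ωs k)]⟩)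
      _ = n := by simp
  set l : ℝ := 4 * s with hl
  have hl0 : 0 ≤ l := by positivity
  have hint : Integrable (fun ωs => Real.exp (l * T ωs)) (Measure.pi (fun _ : Fin n => μ)) := by
    apply int_of_bdd _ (by fun_prop) (C := Real.exp (l * n))
    intro ωs
    rw [abs_of_nonneg (Real.exp_pos _).le]
    apply Real.exp_le_exp.mpr
    have := (abs_le.mp (hTbdd ωs)).2
    nlinarith
  have hchern := measure_ge_le_exp_mul_mgf (μ := Measure.pi (fun _ : Fin n => μ))
    (X := T) (t := l) ((n : ℝ) * s) hl0 hint
  have hmgf : mgf T (Measure.pi (fun _ : Fin n => μ)) l ≤ Real.exp (l ^ 2 / 8) ^ n := by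
    have hprod : ∀ ωs : Fin n → Ω, Real.exp (l * T ωs) =
        ∏ k : Fin n, Real.exp (l * (Y (ωs k) - Ey)) := by
      intro ωs
      rw [← Real.exp_sum, hT, Finset.mul_sum]
    have : mgf T (Measure.pi (fun _ : Fin n => μ)) l =
        (∫ ω, Real.exp (l * (Y ω - Ey)) ∂μ) ^ n := by
      rw [mgf, ← hvol]
      simp_rw [hprod]
      exact MeasureTheory.integral_fintype_prod_eq_pow (ι := Fin n)
        (fun ω => Real.exp (l * (Y ω - Ey))) |>.trans (by rw [Fintype.card_fin]; rfl)
    rw [this]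
    apply pow_le_pow_left₀ (integral_nonneg (fun ω => (Real.exp_pos _).le))
    exact mgf_step μ Y hY h0 h1 l hl0
  have hfinal : Real.exp (-l * ((n:ℝ) * s)) * Real.exp (l ^ 2 / 8) ^ n =
      Real.exp (-(2 * n * s ^ 2)) := by
    rw [← Real.exp_nat_mul, ← Real.exp_add, hl]
    ring_nf
  have hle : (Measure.pi (fun _ : Fin n => μ) {ωs | (n : ℝ) * s ≤ T ωs}).toReal ≤
      Real.exp (-(2 * n * s ^ 2)) := by
    calc (Measure.pi (fun _ : Fin n => μ) {ωs | (n : ℝ) * s ≤ T ωs}).toReal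
        ≤ Real.exp (-l * ((n:ℝ) * s)) * mgf T (Measure.pi (fun _ : Fin n => μ)) l := hchern
      _ ≤ Real.exp (-l * ((n:ℝ) * s)) * Real.exp (l ^ 2 / 8) ^ n :=
          mul_le_mul_of_nonneg_left hmgf (Real.exp_pos _).le
      _ = Real.exp (-(2 * n * s ^ 2)) := hfinal
  rw [← ENNReal.ofReal_toReal (measure_ne_top _ _)]
  exact ENNReal.ofReal_le_ofReal hle

lemma dev_bound {Ω : Type*} [MeasurableSpace Ω] (μ : Measure Ω) [IsProbabilityMeasure μ]
    (n : ℕ) (hn : 0 < n) (Y : Ω → ℝ) (hY : Measurable Y)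
    (h0 : ∀ ω, 0 ≤ Y ω) (h1 : ∀ ω, Y ω ≤ 1) (s : ℝ) (hs : 0 ≤ s) :
    Measure.pi (fun _ : Fin n => μ)
      {ωs | s < |(1 / (n : ℝ)) * ∑ l : Fin n, Y (ωs l) - ∫ ω', Y ω' ∂μ|} ≤
      ENNReal.ofReal (Real.exp (-(2 * n * s ^ 2))) +
      ENNReal.ofReal (Real.exp (-(2 * n * s ^ 2))) := by
  set Ey := ∫ ω', Y ω' ∂μ with hEy
  have hn' : (0:ℝ) < n := Nat.cast_pos.mpr hn
  have hY' : Measurable (fun ω => 1 - Y ω) := measurable_const.sub hY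
  have hYint : Integrable Y μ := int_of_bdd μ hY (C := 1)
    (fun ω => abs_le.mpr ⟨by linarith [h0 ω], h1 ω⟩)
  have hE' : ∫ ω', (1 - Y ω') ∂μ = 1 - Ey := by
    have := integral_sub (μ := μ) (integrable_const (1:ℝ)) hYint
    simpa using this
  have hsub : {ωs : Fin n → Ω | s < |(1 / (n : ℝ)) * ∑ l : Fin n, Y (ωs l) - Ey|} ⊆
      {ωs | (n : ℝ) * s ≤ ∑ k : Fin n, (Y (ωs k) - Ey)} ∪
      {ωs | (n : ℝ) * s ≤ ∑ k : Fin n, ((1 - Y (ωs k)) - ∫ ω', (1 - Y ω') ∂μ)} := by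
    intro ωs hω
    simp only [Set.mem_setOf_eq] at hω
    have hsum1 : ∑ k : Fin n, (Y (ωs k) - Ey) =
        (n : ℝ) * ((1 / (n : ℝ)) * ∑ l : Fin n, Y (ωs l) - Ey) := by
      rw [Finset.sum_sub_distrib, Finset.sum_const, Finset.card_univ, Fintype.card_fin]
      field_simp
      rw [nsmul_eq_mul]
    have hsum2 : ∑ k : Fin n, ((1 - Y (ωs k)) - ∫ ω', (1 - Y ω') ∂μ) =
        -((n : ℝ) * ((1 / (n : ℝ)) * ∑ l : Fin n, Y (ωs l) - Ey)) := by
      rw [hE', Finset.sum_sub_distrib, Finset.sum_sub_distrib, Finset.sum_const,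
        Finset.sum_const, Finset.card_univ, Fintype.card_fin]
      field_simp
      ring
    rcases lt_or_ge ((1 / (n : ℝ)) * ∑ l : Fin n, Y (ωs l) - Ey) 0 with hneg | hpos
    · right
      simp only [Set.mem_setOf_eq, hsum2]
      rcases abs_cases ((1 / (n : ℝ)) * ∑ l : Fin n, Y (ωs l) - Ey) with ⟨he, _⟩ | ⟨he, _⟩
      · nlinarith
      · nlinarith
    · left
      simp only [Set.mem_setOf_eq, hsum1]
      rcases abs_cases ((1 / (n : ℝ)) * ∑ l : Fin n, Y (ωs l) - Ey) with ⟨he, _⟩ | ⟨he, _⟩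
      · nlinarith
      · nlinarith
  refine (measure_mono hsub).trans ((measure_union_le _ _).trans ?_)
  gcongr
  · exact tail_bound μ n Y hY h0 h1 s hs
  · exact tail_bound μ n (fun ω => 1 - Y ω) hY'
      (fun ω => by change (0:ℝ) ≤ 1 - Y ω; linarith [h1 ω])
      (fun ω => by change (1:ℝ) - Y ω ≤ 1; linarith [h0 ω]) s hs

lemma avg_mem_unit {n : ℕ} {f : Fin n → ℝ} (h0 : ∀ k, 0 ≤ f k) (h1 : ∀ k, f k ≤ 1) :
    0 ≤ (1 / (n : ℝ)) * ∑ l : Fin n, f l ∧ (1 / (n : ℝ)) * ∑ l : Fin n, f l ≤ 1 := by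
  rcases Nat.eq_zero_or_pos n with rfl | hn
  · simp
  have hn' : (0:ℝ) < n := Nat.cast_pos.mpr hn
  constructor
  · exact mul_nonneg (by positivity) (Finset.sum_nonneg (fun k _ => h0 k))
  · have hsum : ∑ l : Fin n, f l ≤ (n : ℝ) := by
      calc ∑ l : Fin n, f l ≤ ∑ _l : Fin n, (1:ℝ) := Finset.sum_le_sum (fun k _ => h1 k)
        _ = n := by simp
    rw [div_mul_eq_mul_div, one_mul, div_le_one hn']
    exact hsum

lemma pair_bound {Ω : Type*} [MeasurableSpace Ω] (μ : Measure Ω) [IsProbabilityMeasure μ]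
    (n : ℕ) (hn : 0 < n) (Y Z : Ω → ℝ) (hY : Measurable Y) (hZ : Measurable Z)
    (hY0 : ∀ ω, 0 ≤ Y ω) (hY1 : ∀ ω, Y ω ≤ 1) (hZ0 : ∀ ω, 0 ≤ Z ω) (hZ1 : ∀ ω, Z ω ≤ 1)
    (s : ℝ) (hs : 0 ≤ s) :
    Measure.pi (fun _ : Fin n => μ)
      {ωs | 3 * s < |((1 / (n : ℝ)) * ∑ k : Fin n, Y (ωs k) * Z (ωs k) -
          ((1 / (n : ℝ)) * ∑ l : Fin n, Y (ωs l)) * ((1 / (n : ℝ)) * ∑ l : Fin n, Z (ωs l))) -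
          ((∫ ω', Y ω' * Z ω' ∂μ) - (∫ ω', Y ω' ∂μ) * (∫ ω', Z ω' ∂μ))|} ≤
      (ENNReal.ofReal (Real.exp (-(2 * n * s ^ 2))) +
       ENNReal.ofReal (Real.exp (-(2 * n * s ^ 2)))) +
      ((ENNReal.ofReal (Real.exp (-(2 * n * s ^ 2))) +
        ENNReal.ofReal (Real.exp (-(2 * n * s ^ 2)))) +
       (ENNReal.ofReal (Real.exp (-(2 * n * s ^ 2))) +
        ENNReal.ofReal (Real.exp (-(2 * n * s ^ 2))))) := by
  set EA := ∫ ω', Y ω' * Z ω' ∂μ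
  set EY := ∫ ω', Y ω' ∂μ
  set EZ := ∫ ω', Z ω' ∂μ
  have hEZ0 : 0 ≤ EZ := integral_nonneg hZ0
  have hEZ1 : EZ ≤ 1 := by
    have := integral_mono (int_of_bdd μ hZ (C := 1)
      (fun ω => abs_le.mpr ⟨by linarith [hZ0 ω], hZ1 ω⟩)) (integrable_const 1) hZ1
    simpa using this
  have hsub : {ωs : Fin n → Ω | 3 * s < |((1 / (n : ℝ)) * ∑ k : Fin n, Y (ωs k) * Z (ωs k) -
          ((1 / (n : ℝ)) * ∑ l : Fin n, Y (ωs l)) * ((1 / (n : ℝ)) * ∑ l : Fin n, Z (ωs l))) -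
          (EA - EY * EZ)|} ⊆
      {ωs | s < |(1 / (n : ℝ)) * ∑ l : Fin n, Y (ωs l) * Z (ωs l) - EA|} ∪
      ({ωs | s < |(1 / (n : ℝ)) * ∑ l : Fin n, Y (ωs l) - EY|} ∪
       {ωs | s < |(1 / (n : ℝ)) * ∑ l : Fin n, Z (ωs l) - EZ|}) := by
    intro ωs hω
    simp only [Set.mem_setOf_eq] at hω
    by_contra hcon
    simp only [Set.mem_union, Set.mem_setOf_eq, not_or, not_lt] at hcon
    obtain ⟨d1, d2, d3⟩ := hcon
    set Ab := (1 / (n : ℝ)) * ∑ k : Fin n, Y (ωs k) * Z (ωs k)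
    set Yb := (1 / (n : ℝ)) * ∑ l : Fin n, Y (ωs l)
    set Zb := (1 / (n : ℝ)) * ∑ l : Fin n, Z (ωs l)
    have hYbu := avg_mem_unit (f := fun l => Y (ωs l)) (fun k => hY0 _) (fun k => hY1 _)
    have hYb0 : (0:ℝ) ≤ Yb := hYbu.1
    have hYb1 : Yb ≤ 1 := hYbu.2
    have key : (Ab - Yb * Zb) - (EA - EY * EZ) =
        (Ab - EA) - Yb * (Zb - EZ) - EZ * (Yb - EY) := by ring
    have hYbabs : |Yb| ≤ 1 := abs_le.mpr ⟨by linarith, hYb1⟩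
    have hEZabs : |EZ| ≤ 1 := abs_le.mpr ⟨by linarith, hEZ1⟩
    have p1 : |Yb * (Zb - EZ)| ≤ s := by
      rw [abs_mul]
      calc |Yb| * |Zb - EZ| ≤ 1 * s := mul_le_mul hYbabs d3 (abs_nonneg _) zero_le_one
        _ = s := one_mul s
    have p2 : |EZ * (Yb - EY)| ≤ s := by
      rw [abs_mul]
      calc |EZ| * |Yb - EY| ≤ 1 * s := mul_le_mul hEZabs d2 (abs_nonneg _) zero_le_one
        _ = s := one_mul s
    have habs : |(Ab - Yb * Zb) - (EA - EY * EZ)| ≤ 3 * s := by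
      rw [key]
      have t1 := abs_sub (Ab - EA - Yb * (Zb - EZ)) (EZ * (Yb - EY))
      have t2 := abs_sub (Ab - EA) (Yb * (Zb - EZ))
      linarith [d1, t1, t2]
    exact absurd hω (not_lt.mpr habs)
  refine (measure_mono hsub).trans ((measure_union_le _ _).trans ?_)
  gcongr
  · exact dev_bound μ n hn (fun ω => Y ω * Z ω) (hY.mul hZ)
      (fun ω => mul_nonneg (hY0 ω) (hZ0 ω))
      (fun ω => mul_le_one₀ (hY1 ω) (hZ0 ω) (hZ1 ω)) s hs
  · refine (measure_union_le _ _).trans ?_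
    gcongr
    · exact dev_bound μ n hn Y hY hY0 hY1 s hs
    · exact dev_bound μ n hn Z hZ hZ0 hZ1 s hs

lemma six_ofReal (x : ℝ) (hx : 0 ≤ x) :
    ENNReal.ofReal x + ENNReal.ofReal x +
      (ENNReal.ofReal x + ENNReal.ofReal x + (ENNReal.ofReal x + ENNReal.ofReal x)) =
      ENNReal.ofReal (6 * x) := by
  rw [← ENNReal.ofReal_add hx hx, ← ENNReal.ofReal_add (by linarith) (by linarith),
    ← ENNReal.ofReal_add (by linarith) (by linarith)]
  congr 1
  ring

lemma sampleCov_eq {Ω : Type*} {q : Type*} [Fintype q] (n : ℕ) (hn : 0 < n)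
    (W : Ω → q → ℝ) (ωs : Fin n → Ω) (z w : q) :
    sampleCov n W ωs z w =
      (1 / (n : ℝ)) * ∑ k : Fin n, W (ωs k) z * W (ωs k) w -
      ((1 / (n : ℝ)) * ∑ l : Fin n, W (ωs l) z) * ((1 / (n : ℝ)) * ∑ l : Fin n, W (ωs l) w) := by
  have hn' : (n:ℝ) ≠ 0 := Nat.cast_ne_zero.mpr hn.ne'
  set a := (1 / (n : ℝ)) * ∑ l : Fin n, W (ωs l) z with ha
  set b := (1 / (n : ℝ)) * ∑ l : Fin n, W (ωs l) w with hb
  have hsum : ∑ k : Fin n, (W (ωs k) z - a) * (W (ωs k) w - b) =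
      ∑ k : Fin n, W (ωs k) z * W (ωs k) w - a * ∑ k : Fin n, W (ωs k) w -
        b * ∑ k : Fin n, W (ωs k) z + (n : ℝ) * (a * b) := by
    have : ∀ k : Fin n, (W (ωs k) z - a) * (W (ωs k) w - b) =
        W (ωs k) z * W (ωs k) w - a * W (ωs k) w - b * W (ωs k) z + a * b := by
      intro k; ring
    rw [Finset.sum_congr rfl (fun k _ => this k), Finset.sum_add_distrib,
      Finset.sum_sub_distrib, Finset.sum_sub_distrib, Finset.sum_const,
      Finset.card_univ, Fintype.card_fin, ← Finset.mul_sum, ← Finset.mul_sum,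
      nsmul_eq_mul]
  have haz : a * (n : ℝ) = ∑ l : Fin n, W (ωs l) z := by
    rw [ha]; field_simp
  have hbw : b * (n : ℝ) = ∑ l : Fin n, W (ωs l) w := by
    rw [hb]; field_simp
  show (1 / (n : ℝ)) * ∑ k : Fin n, (W (ωs k) z - a) * (W (ωs k) w - b) = _
  rw [hsum, ← haz, ← hbw]
  field_simp
  ring

end Helpers

/-- concentration of the sample indicator covariance matrix around the
population one: for `τ > 2`, with probability at least `1 − 1/p^{τ−2}` over an i.i.d.
sample of size `n`, every entry of `Σ̂ − Σ` is bounded by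
`(3/√2) √((log(6m²) + τ log p)/n)`. -/
theorem stmt10 {Ω : Type*} [MeasurableSpace Ω] (μ : MeasureTheory.Measure Ω)
    [MeasureTheory.IsProbabilityMeasure μ]
    (p m n : ℕ) (hn : 0 < n)
    (X : Ω → Fin p → Fin (m + 1)) (hX : ∀ k, Measurable fun ω => X ω k)
    (τ : ℝ) (hτ : 2 < τ) :
    ENNReal.ofReal (1 - 1 / (p : ℝ) ^ (τ - 2)) ≤
      MeasureTheory.Measure.pi (fun _ : Fin n => μ)
        {ωs | ∀ z w : Fin p × Fin m,
          |sampleCov n (fun ω (z' : Fin p × Fin m) => Vfun (X ω z'.1) z'.2) ωs z w -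
            covRV μ (fun ω => Vfun (X ω z.1) z.2) (fun ω => Vfun (X ω w.1) w.2)| ≤
          (3 / Real.sqrt 2) *
            Real.sqrt ((Real.log (6 * (m : ℝ) ^ 2) + τ * Real.log p) / n)} := by
  classical
  have hτ0 : (0:ℝ) ≤ τ := by linarith
  set π := MeasureTheory.Measure.pi (fun _ : Fin n => μ) with hπ
  have hinv0 : (0:ℝ) ≤ 1 / (p : ℝ) ^ (τ - 2) := by positivity
  by_cases hpm : p = 0 ∨ m = 0
  · have huniv : {ωs : Fin n → Ω | ∀ z w : Fin p × Fin m,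
        |sampleCov n (fun ω (z' : Fin p × Fin m) => Vfun (X ω z'.1) z'.2) ωs z w -
          covRV μ (fun ω => Vfun (X ω z.1) z.2) (fun ω => Vfun (X ω w.1) w.2)| ≤
        (3 / Real.sqrt 2) *
          Real.sqrt ((Real.log (6 * (m : ℝ) ^ 2) + τ * Real.log p) / n)} = Set.univ := by
      ext ωs
      simp only [Set.mem_setOf_eq, Set.mem_univ, iff_true]
      intro z w
      rcases hpm with h | h
      · exact (h ▸ z.1 : Fin 0).elim0
      · exact (h ▸ z.2 : Fin 0).elim0
    rw [huniv, measure_univ]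
    exact ENNReal.ofReal_le_one.mpr (by linarith)
  push_neg at hpm
  obtain ⟨hp0, hm0⟩ := hpm
  have hp : 0 < p := Nat.pos_of_ne_zero hp0
  have hm : 0 < m := Nat.pos_of_ne_zero hm0
  have hp' : (0:ℝ) < p := Nat.cast_pos.mpr hp
  have hm' : (1:ℝ) ≤ m := Nat.one_le_cast.mpr hm
  have hp1 : (1:ℝ) ≤ p := Nat.one_le_cast.mpr hp
  set L := Real.log (6 * (m : ℝ) ^ 2) + τ * Real.log p with hLdef
  have hL0 : 0 ≤ L :=
    add_nonneg (Real.log_nonneg (by nlinarith)) (mul_nonneg hτ0 (Real.log_nonneg hp1))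
  set s := Real.sqrt (L / n) / Real.sqrt 2 with hsdef
  have hs0 : 0 ≤ s := by positivity
  have ht3 : (3 / Real.sqrt 2) * Real.sqrt (L / n) = 3 * s := by
    rw [hsdef]; ring
  have h2ns : 2 * (n:ℝ) * s ^ 2 = L := by
    have hn' : (n:ℝ) ≠ 0 := Nat.cast_ne_zero.mpr hn.ne'
    rw [hsdef, div_pow, Real.sq_sqrt (div_nonneg hL0 (Nat.cast_nonneg n)),
      Real.sq_sqrt (by norm_num : (0:ℝ) ≤ 2)]
    field_simp
  have hexp : Real.exp (-(2 * (n:ℝ) * s ^ 2)) = (6 * (m:ℝ)^2)⁻¹ * ((p:ℝ) ^ τ)⁻¹ := by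
    rw [h2ns, hLdef, neg_add, Real.exp_add, Real.exp_neg, Real.exp_neg,
      Real.exp_log (by positivity), mul_comm τ (Real.log p),
      ← Real.rpow_def_of_pos hp']
  -- the indicator variables
  have hVmeas : ∀ z : Fin p × Fin m, Measurable (fun ω => Vfun (X ω z.1) z.2) :=
    fun z => (measurable_of_countable (fun x : Fin (m+1) => Vfun x z.2)).comp (hX z.1)
  have hV0 : ∀ (x : Fin (m+1)) (a : Fin m), 0 ≤ Vfun x a := by
    intro x a; unfold Vfun; split <;> norm_num
  have hV1 : ∀ (x : Fin (m+1)) (a : Fin m), Vfun x a ≤ 1 := by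
    intro x a; unfold Vfun; split <;> norm_num
  -- bad events
  set e := ENNReal.ofReal (Real.exp (-(2 * (n:ℝ) * s ^ 2))) with hedef
  set B : (Fin p × Fin m) × (Fin p × Fin m) → Set (Fin n → Ω) := fun zw =>
    {ωs | 3 * s < |((1 / (n : ℝ)) * ∑ k : Fin n,
        Vfun (X (ωs k) zw.1.1) zw.1.2 * Vfun (X (ωs k) zw.2.1) zw.2.2 -
        ((1 / (n : ℝ)) * ∑ l : Fin n, Vfun (X (ωs l) zw.1.1) zw.1.2) *
        ((1 / (n : ℝ)) * ∑ l : Fin n, Vfun (X (ωs l) zw.2.1) zw.2.2)) -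
        ((∫ ω', Vfun (X ω' zw.1.1) zw.1.2 * Vfun (X ω' zw.2.1) zw.2.2 ∂μ) -
         (∫ ω', Vfun (X ω' zw.1.1) zw.1.2 ∂μ) * (∫ ω', Vfun (X ω' zw.2.1) zw.2.2 ∂μ))|}
    with hBdef
  have hBbound : ∀ zw, π (B zw) ≤ (e + e) + ((e + e) + (e + e)) := by
    intro zw
    exact pair_bound μ n hn (fun ω => Vfun (X ω zw.1.1) zw.1.2)
      (fun ω => Vfun (X ω zw.2.1) zw.2.2) (hVmeas zw.1) (hVmeas zw.2)
      (fun ω => hV0 _ _) (fun ω => hV1 _ _) (fun ω => hV0 _ _) (fun ω => hV1 _ _) s hs0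
  set S := {ωs : Fin n → Ω | ∀ z w : Fin p × Fin m,
      |sampleCov n (fun ω (z' : Fin p × Fin m) => Vfun (X ω z'.1) z'.2) ωs z w -
        covRV μ (fun ω => Vfun (X ω z.1) z.2) (fun ω => Vfun (X ω w.1) w.2)| ≤
      (3 / Real.sqrt 2) * Real.sqrt (L / n)} with hSdef
  have hAc : Sᶜ ⊆ ⋃ zw, B zw := by
    intro ωs hω
    simp only [hSdef, Set.mem_compl_iff, Set.mem_setOf_eq] at hω
    push_neg at hω
    obtain ⟨z, w, hzw⟩ := hω
    refine Set.mem_iUnion.mpr ⟨(z, w), ?_⟩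
    rw [sampleCov_eq n hn (fun ω (z' : Fin p × Fin m) => Vfun (X ω z'.1) z'.2) ωs z w,
      ht3] at hzw
    simp only [covRV, expec] at hzw
    simp only [hBdef, Set.mem_setOf_eq]
    exact hzw
  have hcard : π (⋃ zw, B zw) ≤
      (Fintype.card ((Fin p × Fin m) × (Fin p × Fin m)) : ENNReal) *
        ((e + e) + ((e + e) + (e + e))) := by
    refine (measure_iUnion_le B).trans ?_
    rw [tsum_fintype]
    refine (Finset.sum_le_card_nsmul _ _ _ (fun zw _ => hBbound zw)).trans_eq ?_
    rw [Finset.card_univ, nsmul_eq_mul]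
  have hsum6 : (e + e) + ((e + e) + (e + e)) =
      ENNReal.ofReal (6 * Real.exp (-(2 * (n:ℝ) * s ^ 2))) := by
    rw [hedef]
    exact six_ofReal _ (Real.exp_pos _).le
  have hKreal : ((Fintype.card ((Fin p × Fin m) × (Fin p × Fin m)) : ℕ) : ℝ) =
      (p:ℝ)^2 * (m:ℝ)^2 := by
    simp only [Fintype.card_prod, Fintype.card_fin]
    push_cast
    ring
  have hpow2 : (p:ℝ) ^ (2:ℝ) = (p:ℝ)^2 := by
    rw [show (2:ℝ) = ((2:ℕ):ℝ) by norm_num, Real.rpow_natCast]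
  have hpτ : (0:ℝ) < (p:ℝ) ^ τ := Real.rpow_pos_of_pos hp' τ
  have hreal : (p:ℝ)^2 * (m:ℝ)^2 * (6 * Real.exp (-(2 * (n:ℝ) * s ^ 2))) =
      1 / (p : ℝ) ^ (τ - 2) := by
    rw [hexp, Real.rpow_sub hp', hpow2]
    have hm2 : (0:ℝ) < (m:ℝ)^2 := by positivity
    field_simp
  have hcompl : π Sᶜ ≤ ENNReal.ofReal (1 / (p : ℝ) ^ (τ - 2)) := by
    refine (measure_mono hAc).trans (hcard.trans ?_)
    rw [hsum6, ← ENNReal.ofReal_natCast, ← ENNReal.ofReal_mul (Nat.cast_nonneg _)]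
    exact le_of_eq (by rw [hKreal, hreal])
  have hone : (1:ENNReal) ≤ π S + π Sᶜ := by
    calc (1:ENNReal) = π Set.univ := measure_univ.symm
      _ = π (S ∪ Sᶜ) := by rw [Set.union_compl_self]
      _ ≤ π S + π Sᶜ := measure_union_le _ _
  have hfin : (1:ENNReal) ≤ π S + ENNReal.ofReal (1 / (p : ℝ) ^ (τ - 2)) :=
    hone.trans (add_le_add le_rfl hcompl)
  show ENNReal.ofReal (1 - 1 / (p : ℝ) ^ (τ - 2)) ≤ π S
  rw [ENNReal.ofReal_sub _ hinv0, ENNReal.ofReal_one]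
  exact tsub_le_iff_right.mpr hfin
end
end

section
/- Let A ∈ ℝ^{q×q} be symmetric positive definite with eigendecomposition A = D Σ_A Dᵀ, where D is orthogonal and Σ_A = diag(σ_1,...,σ_q) with σ_a > 0, and let B ∈ ℝ^{q×q} be symmetric. Then the unique minimizer over symmetric matrices Θ ∈ ℝ^{q×q} of the function Θ ↦ (1/2)⟨Θ², A⟩_F − ⟨Θ, B⟩_F is H(A,B) = D{(Dᵀ B D) ∘ C}Dᵀ, where C ∈ ℝ^{q×q} has entries C_{ab} = 2/(σ_a + σ_b) and ∘ denotes the Hadamard (entrywise) product. -/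
open Matrix

noncomputable section

/-- The Frobenius inner product `⟨M, N⟩_F = tr(Mᵀ N)`. -/
def frobInner {q : Type*} [Fintype q] (M N : Matrix q q ℝ) : ℝ := (Mᵀ * N).trace

namespace Stmt13Aux

lemma half_swap {q : ℕ} (σ : Fin q → ℝ) (M : Matrix (Fin q) (Fin q) ℝ)
    (hM : ∀ a b, M b a = M a b) :
    ∑ a, ∑ b, σ a / 2 * M a b ^ 2 = ∑ a, ∑ b, (σ a + σ b) / 4 * M a b ^ 2 := by
  have h : ∑ a, ∑ b, σ a / 2 * M a b ^ 2 = ∑ a, ∑ b, σ b / 2 * M a b ^ 2 := by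
    rw [Finset.sum_comm]
    refine Finset.sum_congr rfl fun a _ => Finset.sum_congr rfl fun b _ => ?_
    rw [hM]
  calc ∑ a, ∑ b, σ a / 2 * M a b ^ 2
      = ((∑ a, ∑ b, σ a / 2 * M a b ^ 2) + ∑ a, ∑ b, σ b / 2 * M a b ^ 2) / 2 := by
        rw [← h]; ring
    _ = ∑ a, ∑ b, (σ a + σ b) / 4 * M a b ^ 2 := by
        rw [← Finset.sum_add_distrib, Finset.sum_div]
        refine Finset.sum_congr rfl fun a _ => ?_
        rw [← Finset.sum_add_distrib, Finset.sum_div]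
        exact Finset.sum_congr rfl fun b _ => by ring

end Stmt13Aux

/-- for `A = D Σ_A Dᵀ` symmetric positive definite (eigendecomposition with
`D` orthogonal and positive eigenvalues `σ`) and `B` symmetric, the unique minimizer of
`Θ ↦ (1/2)⟨Θ², A⟩_F − ⟨Θ, B⟩_F` over symmetric matrices is
`H(A,B) = D {(Dᵀ B D) ∘ C} Dᵀ` with `C_{ab} = 2/(σ_a + σ_b)`. -/
theorem stmt13 (q : ℕ) (A B D : Matrix (Fin q) (Fin q) ℝ)
    (hD : D * Dᵀ = 1 ∧ Dᵀ * D = 1)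
    (σ : Fin q → ℝ) (hσ : ∀ a, 0 < σ a)
    (hA : A = D * Matrix.diagonal σ * Dᵀ)
    (hB : B.IsSymm) :
    (D * Matrix.hadamard (Dᵀ * B * D) (Matrix.of fun a b => 2 / (σ a + σ b)) * Dᵀ).IsSymm ∧
    (∀ Θ : Matrix (Fin q) (Fin q) ℝ, Θ.IsSymm →
      (1 / 2) * frobInner
          ((D * Matrix.hadamard (Dᵀ * B * D) (Matrix.of fun a b => 2 / (σ a + σ b)) * Dᵀ) *
           (D * Matrix.hadamard (Dᵀ * B * D) (Matrix.of fun a b => 2 / (σ a + σ b)) * Dᵀ)) A -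
        frobInner (D * Matrix.hadamard (Dᵀ * B * D) (Matrix.of fun a b => 2 / (σ a + σ b)) * Dᵀ) B ≤
      (1 / 2) * frobInner (Θ * Θ) A - frobInner Θ B) ∧
    (∀ Θ : Matrix (Fin q) (Fin q) ℝ, Θ.IsSymm →
      (∀ Θ' : Matrix (Fin q) (Fin q) ℝ, Θ'.IsSymm →
        (1 / 2) * frobInner (Θ * Θ) A - frobInner Θ B ≤
        (1 / 2) * frobInner (Θ' * Θ') A - frobInner Θ' B) →
      Θ = D * Matrix.hadamard (Dᵀ * B * D) (Matrix.of fun a b => 2 / (σ a + σ b)) * Dᵀ) := by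
  obtain ⟨hD1, hD2⟩ := hD
  set C : Matrix (Fin q) (Fin q) ℝ := Matrix.of (fun a b => 2 / (σ a + σ b)) with hCdef
  set N : Matrix (Fin q) (Fin q) ℝ := Dᵀ * B * D with hNdef
  set M0 : Matrix (Fin q) (Fin q) ℝ := Matrix.hadamard N C with hM0def
  have hs : ∀ a b : Fin q, 0 < σ a + σ b := fun a b => add_pos (hσ a) (hσ b)
  have hD1' : ∀ X : Matrix (Fin q) (Fin q) ℝ, D * (Dᵀ * X) = X := fun X => by
    rw [← Matrix.mul_assoc, hD1, Matrix.one_mul]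
  have hD2' : ∀ X : Matrix (Fin q) (Fin q) ℝ, Dᵀ * (D * X) = X := fun X => by
    rw [← Matrix.mul_assoc, hD2, Matrix.one_mul]
  have hNT : Nᵀ = N := by
    rw [hNdef]
    simp only [Matrix.transpose_mul, Matrix.transpose_transpose, hB.eq, Matrix.mul_assoc]
  have hNs : ∀ a b : Fin q, N b a = N a b := fun a b => congrFun (congrFun hNT a) b
  have hM0s : ∀ a b : Fin q, M0 b a = M0 a b := by
    intro a b
    simp only [hM0def, Matrix.hadamard_apply, hCdef, Matrix.of_apply, hNs a b, add_comm (σ b)]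
  have hM0T : M0ᵀ = M0 := by
    ext a b; exact hM0s a b
  have hHT : (D * M0 * Dᵀ).IsSymm := by
    show (D * M0 * Dᵀ)ᵀ = D * M0 * Dᵀ
    simp only [Matrix.transpose_mul, Matrix.transpose_transpose, hM0T, Matrix.mul_assoc]
  have hconj : ∀ Θ : Matrix (Fin q) (Fin q) ℝ, D * (Dᵀ * Θ * D) * Dᵀ = Θ := by
    intro Θ
    simp only [Matrix.mul_assoc, hD1']
    rw [hD1, Matrix.mul_one]
  have hDHD : Dᵀ * (D * M0 * Dᵀ) * D = M0 := by
    simp only [Matrix.mul_assoc, hD2']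
    rw [hD2, Matrix.mul_one]
  have hN0 : ∀ a b : Fin q, N a b = (σ a + σ b) / 2 * M0 a b := by
    intro a b
    have h := (hs a b).ne'
    simp only [hM0def, Matrix.hadamard_apply, hCdef, Matrix.of_apply]
    field_simp
  have key : ∀ Θ : Matrix (Fin q) (Fin q) ℝ, Θ.IsSymm →
      (1 / 2) * frobInner (Θ * Θ) A - frobInner Θ B
        = ∑ a, ∑ b, (σ a + σ b) / 4 *
            (((Dᵀ * Θ * D) a b - M0 a b) ^ 2 - M0 a b ^ 2) := by
    intro Θ hΘ
    set M : Matrix (Fin q) (Fin q) ℝ := Dᵀ * Θ * D with hMdef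
    have hΘeq : Θ = D * M * Dᵀ := (hconj Θ).symm
    have hMT : Mᵀ = M := by
      rw [hMdef]
      simp only [Matrix.transpose_mul, Matrix.transpose_transpose, hΘ.eq, Matrix.mul_assoc]
    have hMs : ∀ a b : Fin q, M b a = M a b := fun a b => congrFun (congrFun hMT a) b
    have h1 : frobInner (Θ * Θ) A = ∑ a, ∑ b, σ a * M a b ^ 2 := by
      have ht : (Θ * Θ)ᵀ = Θ * Θ := by rw [Matrix.transpose_mul, hΘ.eq]
      have hprod : Θ * Θ * A = D * (M * M * Matrix.diagonal σ) * Dᵀ := by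
        rw [hΘeq, hA]
        simp only [Matrix.mul_assoc, hD2']
      rw [frobInner, ht, hprod, Matrix.trace_mul_cycle, ← Matrix.mul_assoc, hD2,
        Matrix.one_mul, Matrix.trace]
      refine Finset.sum_congr rfl fun a _ => ?_
      rw [Matrix.diag_apply, Matrix.mul_diagonal, Matrix.mul_apply, Finset.sum_mul]
      refine Finset.sum_congr rfl fun b _ => ?_
      rw [hMs a b]; ring
    have h2 : frobInner Θ B = ∑ a, ∑ b, N a b * M a b := by
      rw [frobInner, hΘ.eq]
      nth_rewrite 1 [hΘeq]
      have e : D * M * Dᵀ * B = D * (M * (Dᵀ * B)) := by simp only [Matrix.mul_assoc]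
      rw [e, Matrix.trace_mul_comm]
      have e2 : M * (Dᵀ * B) * D = M * N := by rw [hNdef]; simp only [Matrix.mul_assoc]
      rw [e2, Matrix.trace]
      refine Finset.sum_congr rfl fun a _ => ?_
      rw [Matrix.diag_apply, Matrix.mul_apply]
      refine Finset.sum_congr rfl fun b _ => ?_
      rw [hNs a b]; ring
    rw [h1, h2]
    have e1 : (1 / 2 : ℝ) * ∑ a, ∑ b, σ a * M a b ^ 2
        = ∑ a, ∑ b, σ a / 2 * M a b ^ 2 := by
      rw [Finset.mul_sum]
      refine Finset.sum_congr rfl fun a _ => ?_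
      rw [Finset.mul_sum]
      exact Finset.sum_congr rfl fun b _ => by ring
    rw [e1, Stmt13Aux.half_swap σ M hMs, ← Finset.sum_sub_distrib]
    refine Finset.sum_congr rfl fun a _ => ?_
    rw [← Finset.sum_sub_distrib]
    refine Finset.sum_congr rfl fun b _ => ?_
    rw [hN0 a b]; ring
  have hpart2 : ∀ Θ : Matrix (Fin q) (Fin q) ℝ, Θ.IsSymm →
      (1 / 2) * frobInner ((D * M0 * Dᵀ) * (D * M0 * Dᵀ)) A - frobInner (D * M0 * Dᵀ) B ≤
      (1 / 2) * frobInner (Θ * Θ) A - frobInner Θ B := by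
    intro Θ hΘ
    rw [key _ hHT, key _ hΘ, hDHD]
    refine Finset.sum_le_sum fun a _ => Finset.sum_le_sum fun b _ => ?_
    have h := hs a b
    nlinarith [sq_nonneg ((Dᵀ * Θ * D) a b - M0 a b)]
  refine ⟨hHT, hpart2, ?_⟩
  intro Θ hΘ hmin
  have heq : (1 / 2) * frobInner (Θ * Θ) A - frobInner Θ B
      = (1 / 2) * frobInner ((D * M0 * Dᵀ) * (D * M0 * Dᵀ)) A - frobInner (D * M0 * Dᵀ) B :=
    le_antisymm (hmin _ hHT) (hpart2 Θ hΘ)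
  rw [key _ hΘ, key _ hHT, hDHD] at heq
  have hz : ∑ a, ∑ b, (σ a + σ b) / 4 * ((Dᵀ * Θ * D) a b - M0 a b) ^ 2 = 0 := by
    calc ∑ a, ∑ b, (σ a + σ b) / 4 * ((Dᵀ * Θ * D) a b - M0 a b) ^ 2
        = ∑ a, ∑ b, ((σ a + σ b) / 4 * (((Dᵀ * Θ * D) a b - M0 a b) ^ 2 - M0 a b ^ 2)
            - (σ a + σ b) / 4 * ((M0 a b - M0 a b) ^ 2 - M0 a b ^ 2)) := by
          refine Finset.sum_congr rfl fun a _ => Finset.sum_congr rfl fun b _ => by ring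
      _ = 0 := by
          simp only [Finset.sum_sub_distrib]
          exact sub_eq_zero_of_eq heq
  have hzz : ∀ a b : Fin q, (Dᵀ * Θ * D) a b = M0 a b := by
    intro a b
    have hnn : ∀ a b : Fin q, 0 ≤ (σ a + σ b) / 4 * ((Dᵀ * Θ * D) a b - M0 a b) ^ 2 :=
      fun a b => mul_nonneg (by linarith [hs a b]) (sq_nonneg _)
    have houter := (Finset.sum_eq_zero_iff_of_nonneg
      (fun a _ => Finset.sum_nonneg fun b _ => hnn a b)).mp hz a (Finset.mem_univ a)
    have hinner := (Finset.sum_eq_zero_iff_of_nonneg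
      (fun b _ => hnn a b)).mp houter b (Finset.mem_univ b)
    have hx : ((Dᵀ * Θ * D) a b - M0 a b) ^ 2 = 0 := by
      rcases mul_eq_zero.mp hinner with h | h
      · exact absurd h (by linarith [hs a b])
      · exact h
    have := pow_eq_zero_iff (two_ne_zero) |>.mp hx
    linarith [this]
  have hMeq : Dᵀ * Θ * D = M0 := by ext a b; exact hzz a b
  rw [← hconj Θ, hMeq]
end
end

section
/- Let A ∈ ℝ^{mp×mp} be symmetric, partitioned into p×p blocks of size m×m, and let λ ≥ 0. Then the unique minimizer over symmetric matrices Θ₀ ∈ ℝ^{mp×mp} of the function Θ₀ ↦ (1/2)‖Θ₀‖_F² − ⟨Θ₀, A⟩_F + λ Σ_{i≠j} ‖(Θ₀)_{[i,j]}‖_F is the matrix S(A,λ) given blockwise by: S(A,λ)_{[i,i]} = A_{[i,i]}; for i ≠ j, S(A,λ)_{[i,j]} = (1 − λ/‖A_{[i,j]}‖_F) A_{[i,j]} if ‖A_{[i,j]}‖_F > λ, and S(A,λ)_{[i,j]} = 0 if ‖A_{[i,j]}‖_F ≤ λ. -/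
open Matrix RealInnerProductSpace

noncomputable section

/-- The Frobenius norm of the `(i,j)`-th `m×m` block of a block matrix. -/
def blockNorm {p m : ℕ} (A : Matrix (Fin p × Fin m) (Fin p × Fin m) ℝ) (i j : Fin p) : ℝ :=
  Real.sqrt (∑ a : Fin m, ∑ b : Fin m, (A (i, a) (j, b)) ^ 2)

/-- The group-Lasso penalty `Σ_{i≠j} ‖Θ_{[i,j]}‖_F` over off-diagonal blocks. -/
def groupPenalty {p m : ℕ} (T : Matrix (Fin p × Fin m) (Fin p × Fin m) ℝ) : ℝ :=
  ∑ i : Fin p, ∑ j : Fin p, if i = j then 0 else blockNorm T i j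

/-- The blockwise soft-thresholding matrix `S(A, λ)`: diagonal blocks are kept, an
off-diagonal block is shrunk by the factor `1 − λ/‖A_{[i,j]}‖_F` if `‖A_{[i,j]}‖_F > λ`
and set to zero otherwise. -/
def softThresh {p m : ℕ} (A : Matrix (Fin p × Fin m) (Fin p × Fin m) ℝ) (lam : ℝ) :
    Matrix (Fin p × Fin m) (Fin p × Fin m) ℝ :=
  fun z w =>
    if z.1 = w.1 then A z w
    else if blockNorm A z.1 w.1 ≤ lam then 0
    else (1 - lam / blockNorm A z.1 w.1) * A z w

def stv {E : Type*} [NormedAddCommGroup E] [InnerProductSpace ℝ E] (a : E) (lam : ℝ) : E :=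
  if ‖a‖ ≤ lam then 0 else (1 - lam / ‖a‖) • a

lemma key_ineq {E : Type*} [NormedAddCommGroup E] [InnerProductSpace ℝ E]
    (a x : E) (lam : ℝ) (hlam : 0 ≤ lam) :
    (1/2)*‖stv a lam‖^2 - ⟪stv a lam, a⟫ + lam*‖stv a lam‖ + (1/2)*‖x - stv a lam‖^2
      ≤ (1/2)*‖x‖^2 - ⟪x, a⟫ + lam*‖x‖ := by
  have hkey : ∀ s : E, s = stv a lam →
      ⟪s, s - a⟫ + lam*‖s‖ ≤ ⟪x, s - a⟫ + lam*‖x‖ := by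
    intro s hs
    by_cases h : ‖a‖ ≤ lam
    · have hs0 : s = 0 := by rw [hs, stv, if_pos h]
      rw [hs0]
      simp only [inner_zero_left, norm_zero, mul_zero, add_zero, zero_sub, inner_neg_right]
      have h1 : ⟪x, a⟫ ≤ ‖x‖ * ‖a‖ := real_inner_le_norm x a
      have h2 : ‖x‖ * ‖a‖ ≤ lam * ‖x‖ := by
        rw [mul_comm]; exact mul_le_mul_of_nonneg_right h (norm_nonneg x)
      nlinarith
    · push_neg at h
      have ha : 0 < ‖a‖ := lt_of_le_of_lt hlam h
      obtain ⟨c, hc⟩ : ∃ c : ℝ, c = 1 - lam / ‖a‖ := ⟨_, rfl⟩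
      have hsc : s = c • a := by rw [hs, stv, if_neg (not_le.mpr h), hc]
      have hc0 : 0 < c := by
        have : lam / ‖a‖ < 1 := (div_lt_one ha).mpr h
        rw [hc]; linarith
      rw [hsc, norm_smul, Real.norm_eq_abs, abs_of_pos hc0, inner_sub_right, inner_sub_right, real_inner_smul_left,
        real_inner_smul_right, real_inner_smul_left, real_inner_self_eq_norm_sq]
      rw [real_inner_smul_right]
      have hc1 : c * (c * ‖a‖^2) - c * ‖a‖^2 + lam * (c * ‖a‖) = 0 := by
        rw [hc]; field_simp; ring
      have h1 : ⟪x, a⟫ ≤ ‖x‖ * ‖a‖ := real_inner_le_norm x a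
      have hdiv : 0 ≤ lam / ‖a‖ := div_nonneg hlam ha.le
      have hc2 : 1 - c = lam / ‖a‖ := by rw [hc]; ring
      have h2 : c * ⟪x, a⟫ - ⟪x, a⟫ + lam * ‖x‖ ≥ 0 := by
        have : (1 - c) * ⟪x, a⟫ ≤ (1 - c) * (‖x‖ * ‖a‖) := by
          apply mul_le_mul_of_nonneg_left h1; rw [hc2]; exact hdiv
        have h3 : (1 - c) * (‖x‖ * ‖a‖) = lam * ‖x‖ := by
          rw [hc2]; field_simp
        nlinarith
      linarith
  have hk := hkey (stv a lam) rfl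
  have hexp : ‖x - stv a lam‖^2 = ‖x‖^2 - 2*⟪x, stv a lam⟫ + ‖stv a lam‖^2 :=
    norm_sub_sq_real x (stv a lam)
  rw [hexp]
  have e1 : ⟪stv a lam, stv a lam - a⟫ = ‖stv a lam‖^2 - ⟪stv a lam, a⟫ := by
    rw [inner_sub_right, real_inner_self_eq_norm_sq]
  have e2 : ⟪x, stv a lam - a⟫ = ⟪x, stv a lam⟫ - ⟪x, a⟫ := inner_sub_right x (stv a lam) a
  have e3 : ⟪stv a lam, a⟫ = ⟪a, stv a lam⟫ := real_inner_comm _ _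
  have e4 : ⟪x, stv a lam⟫ = ⟪stv a lam, x⟫ := real_inner_comm _ _
  rw [e1, e2] at hk
  nlinarith



def vb {p m : ℕ} (T : Matrix (Fin p × Fin m) (Fin p × Fin m) ℝ) (i j : Fin p) :
    EuclideanSpace ℝ (Fin m × Fin m) := WithLp.toLp 2 (fun ab : Fin m × Fin m => T (i, ab.1) (j, ab.2))

lemma blockNorm_eq {p m : ℕ} (T : Matrix (Fin p × Fin m) (Fin p × Fin m) ℝ) (i j : Fin p) :
    blockNorm T i j = ‖vb T i j‖ := by
  rw [blockNorm, EuclideanSpace.norm_eq]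
  congr 1
  rw [Fintype.sum_prod_type]
  simp [vb, Real.norm_eq_abs, sq_abs]

lemma frobInner_eq {p m : ℕ} (T A : Matrix (Fin p × Fin m) (Fin p × Fin m) ℝ) :
    frobInner T A = ∑ i : Fin p, ∑ j : Fin p, ⟪vb T i j, vb A i j⟫ := by
  simp only [PiLp.inner_apply, RCLike.inner_apply, starRingEnd_apply, star_trivial]
  rw [frobInner, Matrix.trace]
  simp only [Matrix.diag_apply, Matrix.mul_apply, Matrix.transpose_apply]
  rw [Finset.sum_comm]
  rw [Fintype.sum_prod_type]
  refine Finset.sum_congr rfl fun i _ => ?_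
  rw [Finset.sum_comm]
  rw [Fintype.sum_prod_type]
  refine Finset.sum_congr rfl fun j _ => ?_
  rw [Fintype.sum_prod_type, Finset.sum_comm]
  exact Finset.sum_congr rfl fun _ _ => Finset.sum_congr rfl fun _ _ => mul_comm _ _



/-- per-block objective -/
def objv {p m : ℕ} (A : Matrix (Fin p × Fin m) (Fin p × Fin m) ℝ) (lam : ℝ)
    (T : Matrix (Fin p × Fin m) (Fin p × Fin m) ℝ) : ℝ :=
  ∑ i : Fin p, ∑ j : Fin p,
    ((1/2)*‖vb T i j‖^2 - ⟪vb T i j, vb A i j⟫ + (if i = j then 0 else lam)*‖vb T i j‖)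

lemma obj_eq {p m : ℕ} (A : Matrix (Fin p × Fin m) (Fin p × Fin m) ℝ) (lam : ℝ)
    (T : Matrix (Fin p × Fin m) (Fin p × Fin m) ℝ) :
    (1/2) * frobInner T T - frobInner T A + lam * groupPenalty T = objv A lam T := by
  rw [frobInner_eq, frobInner_eq, groupPenalty, objv]
  simp only [blockNorm_eq, real_inner_self_eq_norm_sq, Finset.mul_sum, mul_ite, mul_zero,
    ite_mul, zero_mul, Finset.sum_add_distrib, Finset.sum_sub_distrib]

lemma vb_softThresh {p m : ℕ} (A : Matrix (Fin p × Fin m) (Fin p × Fin m) ℝ) (lam : ℝ)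
    (hlam : 0 ≤ lam) (i j : Fin p) :
    vb (softThresh A lam) i j = stv (vb A i j) (if i = j then 0 else lam) := by
  by_cases hij : i = j
  · rw [if_pos hij]
    subst hij
    have h1 : vb (softThresh A lam) i i = vb A i i := by
      ext ab
      show softThresh A lam (i, ab.1) (i, ab.2) = A (i, ab.1) (i, ab.2)
      rw [softThresh]
      simp
    rw [h1, stv]
    by_cases h0 : ‖vb A i i‖ ≤ (0:ℝ)
    · rw [if_pos h0]
      exact norm_le_zero_iff.mp h0
    · rw [if_neg h0]
      simp
  · rw [if_neg hij, stv, ← blockNorm_eq]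
    by_cases hb : blockNorm A i j ≤ lam
    · rw [if_pos hb]
      ext ab
      show softThresh A lam (i, ab.1) (j, ab.2) = 0
      rw [softThresh]
      simp only [hij, if_neg, if_pos hb]
      simp [hij, hb]
    · rw [if_neg hb]
      ext ab
      show softThresh A lam (i, ab.1) (j, ab.2) = _
      rw [softThresh]
      simp only []
      rw [if_neg hij, if_neg hb]
      rfl

lemma main_ineq {p m : ℕ} (A : Matrix (Fin p × Fin m) (Fin p × Fin m) ℝ) (lam : ℝ)
    (hlam : 0 ≤ lam) (T : Matrix (Fin p × Fin m) (Fin p × Fin m) ℝ) :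
    objv A lam (softThresh A lam) +
      (1/2) * ∑ i : Fin p, ∑ j : Fin p, ‖vb T i j - vb (softThresh A lam) i j‖^2
    ≤ objv A lam T := by
  rw [objv, objv]
  simp only [Finset.mul_sum, ← Finset.sum_add_distrib]
  refine Finset.sum_le_sum fun i _ => Finset.sum_le_sum fun j _ => ?_
  have hlam' : 0 ≤ (if i = j then 0 else lam) := by split <;> simp [hlam]
  have h := key_ineq (vb A i j) (vb T i j) (if i = j then 0 else lam) hlam'
  rw [vb_softThresh A lam hlam i j]
  linarith

lemma blockNorm_symm {p m : ℕ} {A : Matrix (Fin p × Fin m) (Fin p × Fin m) ℝ}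
    (hA : A.IsSymm) (i j : Fin p) : blockNorm A j i = blockNorm A i j := by
  rw [blockNorm, blockNorm]
  congr 1
  rw [Finset.sum_comm]
  refine Finset.sum_congr rfl fun a _ => Finset.sum_congr rfl fun b _ => ?_
  rw [hA.apply]

lemma softThresh_symm {p m : ℕ} {A : Matrix (Fin p × Fin m) (Fin p × Fin m) ℝ}
    (hA : A.IsSymm) (lam : ℝ) : (softThresh A lam).IsSymm := by
  apply Matrix.IsSymm.ext
  intro z w
  show softThresh A lam w z = softThresh A lam z w
  rw [softThresh, softThresh]
  by_cases h : z.1 = w.1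
  · rw [if_pos h, if_pos h.symm, hA.apply]
  · rw [if_neg h, if_neg (fun hh => h hh.symm), blockNorm_symm hA, hA.apply]

/-- the unique minimizer over symmetric matrices of
`Θ₀ ↦ (1/2)‖Θ₀‖_F² − ⟨Θ₀, A⟩_F + λ Σ_{i≠j} ‖(Θ₀)_{[i,j]}‖_F` is the blockwise
soft-thresholding matrix `S(A, λ)`. -/
theorem stmt14 (p m : ℕ) (A : Matrix (Fin p × Fin m) (Fin p × Fin m) ℝ)
    (hA : A.IsSymm) (lam : ℝ) (hlam : 0 ≤ lam) :
    (softThresh A lam).IsSymm ∧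
    (∀ T : Matrix (Fin p × Fin m) (Fin p × Fin m) ℝ, T.IsSymm →
      (1 / 2) * frobInner (softThresh A lam) (softThresh A lam) -
          frobInner (softThresh A lam) A + lam * groupPenalty (softThresh A lam) ≤
      (1 / 2) * frobInner T T - frobInner T A + lam * groupPenalty T) ∧
    (∀ T : Matrix (Fin p × Fin m) (Fin p × Fin m) ℝ, T.IsSymm →
      (∀ T' : Matrix (Fin p × Fin m) (Fin p × Fin m) ℝ, T'.IsSymm →
        (1 / 2) * frobInner T T - frobInner T A + lam * groupPenalty T ≤
        (1 / 2) * frobInner T' T' - frobInner T' A + lam * groupPenalty T') →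
      T = softThresh A lam) := by
  have hST := softThresh_symm hA lam
  refine ⟨hST, ?_, ?_⟩
  · intro T _
    rw [obj_eq, obj_eq]
    have h := main_ineq A lam hlam T
    have hnn : 0 ≤ ∑ i : Fin p, ∑ j : Fin p, ‖vb T i j - vb (softThresh A lam) i j‖^2 :=
      Finset.sum_nonneg fun i _ => Finset.sum_nonneg fun j _ => sq_nonneg _
    linarith
  · intro T _ hmin
    have h1 := hmin (softThresh A lam) hST
    rw [obj_eq, obj_eq] at h1
    have h2 := main_ineq A lam hlam T
    have hnn : ∀ i ∈ (Finset.univ : Finset (Fin p)), 0 ≤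
        ∑ j : Fin p, ‖vb T i j - vb (softThresh A lam) i j‖^2 :=
      fun i _ => Finset.sum_nonneg fun j _ => sq_nonneg _
    have hd0 : ∑ i : Fin p, ∑ j : Fin p, ‖vb T i j - vb (softThresh A lam) i j‖^2 = 0 := by
      have : ∑ i : Fin p, ∑ j : Fin p, ‖vb T i j - vb (softThresh A lam) i j‖^2 ≤ 0 := by
        linarith
      exact le_antisymm this (Finset.sum_nonneg hnn)
    have hvb : ∀ i j : Fin p, vb T i j = vb (softThresh A lam) i j := by
      intro i j
      have h3 := (Finset.sum_eq_zero_iff_of_nonneg hnn).mp hd0 i (Finset.mem_univ i)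
      have h4 := (Finset.sum_eq_zero_iff_of_nonneg
        (fun j _ => sq_nonneg _)).mp h3 j (Finset.mem_univ j)
      have h5 : ‖vb T i j - vb (softThresh A lam) i j‖ = 0 := by
        have := sq_eq_zero_iff.mp h4
        exact this
      rw [norm_eq_zero, sub_eq_zero] at h5
      exact h5
    ext z w
    have := congrArg (fun v : EuclideanSpace ℝ (Fin m × Fin m) => v (z.2, w.2)) (hvb z.1 w.1)
    exact this
end
end

section
/- Let X = (X^1,...,X^p) be a binary random vector (each X^i taking two values a_0 ≠ a_1) whose covariance matrix var(X) is invertible. Then for any pair i ≠ j, X^i and X^j are additively conditionally independent given X^{−{i,j}} if and only if the (i,j)-th entry of (var(X))^{-1} is zero; equivalently, if and only if the (i,j)-th entry of the inverse of the correlation matrix of X is zero. -/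
open MeasureTheory

noncomputable section

section Aux
variable {Ω : Type*} [MeasurableSpace Ω] (μ : Measure Ω) [IsProbabilityMeasure μ]
  {p : ℕ} {a₀ a₁ : ℝ} (X : Ω → Fin p → ℝ)

lemma integrable_of_bdd {f : Ω → ℝ} (hf : Measurable f) (M : ℝ) (h : ∀ ω, |f ω| ≤ M) :
    Integrable f μ :=
  (integrable_const M).mono' hf.aestronglyMeasurable
    (Filter.Eventually.of_forall (by simpa [Real.norm_eq_abs] using h))

variable (hmeas : ∀ k, Measurable fun ω => X ω k) (hval : ∀ ω k, X ω k = a₀ ∨ X ω k = a₁)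

include hmeas hval

lemma int_X (k : Fin p) : Integrable (fun ω => X ω k) μ := by
  refine integrable_of_bdd μ (hmeas k) (max |a₀| |a₁|) fun ω => ?_
  rcases hval ω k with h | h <;> rw [h]
  · exact le_max_left _ _
  · exact le_max_right _ _

/-- The centered coordinate. -/
def Ym (k : Fin p) : Ω → ℝ := fun ω => X ω k - expec μ (fun ω => X ω k)

lemma int_Y (k : Fin p) : Integrable (Ym μ X k) μ :=
  (int_X μ X hmeas hval k).sub (integrable_const _)

lemma meas_Y (k : Fin p) : Measurable (Ym μ X k) := (hmeas k).sub measurable_const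

lemma bdd_Y (k : Fin p) : ∀ ω, |Ym μ X k ω| ≤ max |a₀| |a₁| + |expec μ (fun ω => X ω k)| := by
  intro ω
  refine (abs_sub _ _).trans (add_le_add_left ?_ _)
  rcases hval ω k with h | h <;> rw [h]
  · exact le_max_left _ _
  · exact le_max_right _ _

lemma int_YY (k l : Fin p) : Integrable (fun ω => Ym μ X k ω * Ym μ X l ω) μ := by
  refine integrable_of_bdd μ ((meas_Y μ X hmeas hval k).mul (meas_Y μ X hmeas hval l))
    ((max |a₀| |a₁| + |expec μ (fun ω => X ω k)|) *
      (max |a₀| |a₁| + |expec μ (fun ω => X ω l)|)) fun ω => ?_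
  rw [abs_mul]
  exact mul_le_mul (bdd_Y μ X hmeas hval k ω) (bdd_Y μ X hmeas hval l ω) (abs_nonneg _)
    (le_trans (abs_nonneg _) (bdd_Y μ X hmeas hval k ω))

lemma expec_Y (k : Fin p) : expec μ (Ym μ X k) = 0 := by
  unfold Ym expec
  rw [integral_sub (int_X μ X hmeas hval k) (integrable_const _), integral_const]
  simp [expec, measure_univ]

lemma expec_YY (k l : Fin p) :
    expec μ (fun ω => Ym μ X k ω * Ym μ X l ω) =
      covRV μ (fun ω => X ω k) (fun ω => X ω l) := by
  set mk := expec μ (fun ω => X ω k) with hmk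
  set ml := expec μ (fun ω => X ω l) with hml
  have hXX : Integrable (fun ω => X ω k * X ω l) μ := by
    refine integrable_of_bdd μ ((hmeas k).mul (hmeas l)) (max |a₀| |a₁| * max |a₀| |a₁|)
      fun ω => ?_
    rw [abs_mul]
    have h1 : ∀ m, |X ω m| ≤ max |a₀| |a₁| := fun m => by
      rcases hval ω m with h | h <;> rw [h]
      · exact le_max_left _ _
      · exact le_max_right _ _
    exact mul_le_mul (h1 k) (h1 l) (abs_nonneg _) (le_trans (abs_nonneg _) (h1 k))
  have heq : (fun ω => Ym μ X k ω * Ym μ X l ω) =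
      fun ω => X ω k * X ω l - mk * X ω l - ml * X ω k + mk * ml := by
    funext ω; simp only [Ym, ← hmk, ← hml]; ring
  rw [heq]
  have h2 : Integrable (fun ω => X ω k * X ω l - mk * X ω l) μ :=
    hXX.sub ((int_X μ X hmeas hval l).const_mul mk)
  have h3 : Integrable (fun ω => X ω k * X ω l - mk * X ω l - ml * X ω k) μ :=
    h2.sub ((int_X μ X hmeas hval k).const_mul ml)
  unfold expec covRV
  rw [integral_add h3 (integrable_const _),
    integral_sub h2 ((int_X μ X hmeas hval k).const_mul ml),
    integral_sub hXX ((int_X μ X hmeas hval l).const_mul mk),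
    integral_const_mul, integral_const_mul, integral_const]
  simp only [measure_univ, ENNReal.toReal_one, probReal_univ, smul_eq_mul, one_mul]
  rw [hmk, hml]
  unfold expec
  ring

lemma expec_prod_sum (c d : Fin p → ℝ) :
    expec μ (fun ω => (∑ k, c k * Ym μ X k ω) * (∑ l, d l * Ym μ X l ω)) =
      ∑ k, ∑ l, c k * d l * covRV μ (fun ω => X ω k) (fun ω => X ω l) := by
  have heq : (fun ω => (∑ k, c k * Ym μ X k ω) * (∑ l, d l * Ym μ X l ω)) =
      fun ω => ∑ k, ∑ l, c k * d l * (Ym μ X k ω * Ym μ X l ω) := by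
    funext ω
    rw [Finset.sum_mul_sum]
    exact Finset.sum_congr rfl fun k _ => Finset.sum_congr rfl fun l _ => by ring
  rw [heq]
  unfold expec
  rw [integral_finset_sum _ (fun k _ => integrable_finset_sum _
    (fun l _ => ((int_YY μ X hmeas hval k l).const_mul _)))]
  refine Finset.sum_congr rfl fun k _ => ?_
  rw [integral_finset_sum _ (fun l _ => ((int_YY μ X hmeas hval k l).const_mul _))]
  refine Finset.sum_congr rfl fun l _ => ?_
  rw [integral_const_mul, ← expec_YY μ X hmeas hval k l]
  rfl

lemma mem_addSpace_iff (ha : a₀ ≠ a₁) (A : Set (Fin p)) (f : Ω → ℝ) :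
    f ∈ addSpace μ X A ↔
      ∃ c : Fin p → ℝ, (∀ k, k ∉ A → c k = 0) ∧ f = fun ω => ∑ k, c k * Ym μ X k ω := by
  constructor
  · intro hf
    induction hf using Submodule.span_induction with
    | mem g hg =>
      obtain ⟨k, hk, φ, hφ0, rfl⟩ := hg
      set β := (φ a₁ - φ a₀) / (a₁ - a₀) with hβ
      have hsub : a₁ - a₀ ≠ 0 := sub_ne_zero.mpr (Ne.symm ha)
      have key : ∀ x, x = a₀ ∨ x = a₁ → φ x = (φ a₀ - β * a₀) + β * x := by
        rintro x (rfl | rfl)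
        · ring
        · rw [hβ]; field_simp; ring
      have hexp : expec μ (fun ω => φ (X ω k)) =
          (φ a₀ - β * a₀) + β * expec μ (fun ω => X ω k) := by
        have h1 : (fun ω => φ (X ω k)) = fun ω => (φ a₀ - β * a₀) + β * X ω k := by
          funext ω; exact key _ (hval ω k)
        rw [h1]
        unfold expec
        rw [integral_add (integrable_const _) ((int_X μ X hmeas hval k).const_mul β),
          integral_const, integral_const_mul]
        simp [expec, measure_univ]
      have h0 : φ a₀ - β * a₀ = -(β * expec μ (fun ω => X ω k)) := by
        rw [hφ0] at hexp; linarith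
      refine ⟨fun l => if l = k then β else 0, fun l hl => by
        simp [show l ≠ k from fun h => hl (h ▸ hk)], ?_⟩
      funext ω
      have hs : ∑ l, (if l = k then β else 0) * Ym μ X l ω = β * Ym μ X k ω := by
        simp [ite_mul]
      rw [hs, key (X ω k) (hval ω k), h0]
      unfold Ym; ring
    | zero => exact ⟨0, fun _ _ => rfl, by funext ω; simp⟩
    | add x y hx hy ihx ihy =>
      obtain ⟨c, hc, rfl⟩ := ihx; obtain ⟨d, hd, rfl⟩ := ihy
      exact ⟨c + d, fun k hk => by simp [hc k hk, hd k hk], by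
        funext ω; simp [Finset.sum_add_distrib, add_mul]⟩
    | smul r x hx ihx =>
      obtain ⟨c, hc, rfl⟩ := ihx
      exact ⟨r • c, fun k hk => by simp [hc k hk], by
        funext ω
        simp only [Pi.smul_apply, smul_eq_mul, Finset.mul_sum, mul_assoc]⟩
  · rintro ⟨c, hc, rfl⟩
    have h1 : (fun ω => ∑ k, c k * Ym μ X k ω) = ∑ k : Fin p, c k • Ym μ X k := by
      funext ω; simp [Finset.sum_apply]
    rw [h1]
    refine Submodule.sum_mem _ fun k _ => ?_
    by_cases hk : k ∈ A
    · refine Submodule.smul_mem _ _ (Submodule.subset_span ?_)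
      exact ⟨k, hk, fun x => x - expec μ (fun ω => X ω k), expec_Y μ X hmeas hval k, rfl⟩
    · rw [hc k hk]; simp

end Aux

section LinAlg
open Matrix

lemma herm_entries {n : ℕ} {K : Matrix (Fin n) (Fin n) ℝ} (h : K.IsHermitian) :
    ∀ k l, K k l = K l k := by
  intro k l
  have h2 := congrFun (congrFun h k) l
  simpa [Matrix.conjTranspose_apply] using h2.symm

lemma diag_pos {n : ℕ} {K : Matrix (Fin n) (Fin n) ℝ} (hK : K.PosDef) (i : Fin n) :
    0 < K i i := by
  have h := hK.dotProduct_mulVec_pos (x := Pi.single i 1) (by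
    intro h0
    have := congrFun h0 i
    simp at this)
  rw [star_trivial] at h
  simpa [single_dotProduct, Matrix.mulVec_single] using h

lemma minor_pos {n : ℕ} {K : Matrix (Fin n) (Fin n) ℝ} (hK : K.PosDef) (i j : Fin n)
    (hij : i ≠ j) : 0 < K i i * K j j - K i j * K j i := by
  have hjj : 0 < K j j := diag_pos hK j
  have hsym := herm_entries hK.isHermitian
  set x : Fin n → ℝ := Pi.single i (K j j) + Pi.single j (-(K j i)) with hx
  have hx0 : x ≠ 0 := by
    intro h0
    have := congrFun h0 i
    simp [hx, Pi.single_apply, hij, Ne.symm hij] at this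
    exact absurd this hjj.ne'
  have h := hK.dotProduct_mulVec_pos hx0
  rw [star_trivial] at h
  rw [hx] at h
  simp only [Matrix.mulVec_add, Matrix.mulVec_single, add_dotProduct,
    single_dotProduct, Pi.add_apply, Pi.smul_apply, op_smul_eq_mul, Matrix.col_apply] at h
  have hval : 0 < K j j * (K i i * K j j - K i j * K j i) := by
    have hKji : K i j = K j i := hsym i j
    nlinarith [h]
  nlinarith [hval, hjj]

end LinAlg

open Matrix

/-- for a binary random vector with invertible covariance matrix, additive
conditional independence of `X^i` and `X^j` given the rest holds iff the `(i,j)`-th entry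
of `(var X)⁻¹` is zero, equivalently iff the `(i,j)`-th entry of the inverse of the
correlation matrix is zero. -/
theorem stmt18 {Ω : Type*} [MeasurableSpace Ω] (μ : MeasureTheory.Measure Ω)
    [MeasureTheory.IsProbabilityMeasure μ]
    (p : ℕ) (a₀ a₁ : ℝ) (ha : a₀ ≠ a₁)
    (X : Ω → Fin p → ℝ) (hmeas : ∀ k, Measurable fun ω => X ω k)
    (hval : ∀ ω k, X ω k = a₀ ∨ X ω k = a₁)
    (V C : Matrix (Fin p) (Fin p) ℝ)
    (hV : ∀ k l, V k l = covRV μ (fun ω => X ω k) (fun ω => X ω l))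
    (hC : ∀ k l, C k l = covRV μ (fun ω => X ω k) (fun ω => X ω l) /
      (Real.sqrt (covRV μ (fun ω => X ω k) (fun ω => X ω k)) *
        Real.sqrt (covRV μ (fun ω => X ω l) (fun ω => X ω l))))
    (hinv : IsUnit V) (i j : Fin p) (hij : i ≠ j) :
    (ACI μ X {i} {j} ({i, j}ᶜ : Set (Fin p)) ↔ V⁻¹ i j = 0) ∧
    (V⁻¹ i j = 0 ↔ C⁻¹ i j = 0) := by
  classical
  have hdet : IsUnit V.det := (Matrix.isUnit_iff_isUnit_det V).mp hinv
  have hVK : V * V⁻¹ = 1 := Matrix.mul_nonsing_inv V hdet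
  have hKV : V⁻¹ * V = 1 := Matrix.nonsing_inv_mul V hdet
  set K := V⁻¹ with hKdef
  have hVs : ∀ k l, V k l = V l k := by
    intro k l
    rw [hV, hV]
    unfold covRV
    have h1 : (fun ω => X ω k * X ω l) = fun ω => X ω l * X ω k :=
      funext fun ω => mul_comm _ _
    rw [h1, mul_comm (expec μ fun ω => X ω k)]
  have hherm : V.IsHermitian := by
    ext k l
    simp [Matrix.conjTranspose_apply, hVs l k]
  have key : ∀ c d : Fin p → ℝ,
      expec μ (fun ω => (∑ k, c k * Ym μ X k ω) * (∑ l, d l * Ym μ X l ω)) =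
        c ⬝ᵥ (V *ᵥ d) := by
    intro c d
    rw [expec_prod_sum μ X hmeas hval c d]
    simp only [dotProduct, Matrix.mulVec, Finset.mul_sum]
    exact Finset.sum_congr rfl fun k _ => Finset.sum_congr rfl fun l _ => by
      rw [hV k l]; ring
  have hPSD : V.PosSemidef := by
    refine Matrix.PosSemidef.of_dotProduct_mulVec_nonneg hherm fun x => ?_
    rw [star_trivial, ← key x x]
    exact integral_nonneg fun ω => mul_self_nonneg _
  have hPD : V.PosDef := by
    refine Matrix.PosDef.of_dotProduct_mulVec_pos hherm fun x hx => lt_of_le_of_ne (hPSD.dotProduct_mulVec_nonneg x) (fun h0 => hx ?_)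
    have hvx0 : V *ᵥ x = 0 := (hPSD.dotProduct_mulVec_zero_iff x).mp h0.symm
    have hx2 : x = K *ᵥ (V *ᵥ x) := by
      rw [Matrix.mulVec_mulVec, hKV, Matrix.one_mulVec]
    rw [hx2, hvx0, Matrix.mulVec_zero]
  have hKPD : K.PosDef := hPD.inv
  have hKs : ∀ k l, K k l = K l k := herm_entries hKPD.isHermitian
  have hKii : 0 < K i i := diag_pos hKPD i
  have hKjj : 0 < K j j := diag_pos hKPD j
  have hminor : 0 < K i i * K j j - K i j * K j i := minor_pos hKPD i j hij
  have hmemA : ∀ k : Fin p, k ∉ ({i} : Set (Fin p)) ∪ ({i, j}ᶜ : Set (Fin p)) ↔ k = j := by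
    intro k
    simp only [Set.mem_union, Set.mem_singleton_iff, Set.mem_compl_iff, Set.mem_insert_iff]
    push_neg
    constructor
    · rintro ⟨h1, h2 | h2⟩
      · exact absurd h2 h1
      · exact h2
    · rintro rfl; exact ⟨Ne.symm hij, Or.inr rfl⟩
  have hmemB : ∀ k : Fin p, k ∉ ({j} : Set (Fin p)) ∪ ({i, j}ᶜ : Set (Fin p)) ↔ k = i := by
    intro k
    simp only [Set.mem_union, Set.mem_singleton_iff, Set.mem_compl_iff, Set.mem_insert_iff]
    push_neg
    constructor
    · rintro ⟨h1, h2 | h2⟩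
      · exact h2
      · exact absurd h2 h1
    · rintro rfl; exact ⟨hij, Or.inl rfl⟩
  have orth_entry : ∀ (c : Fin p → ℝ) (l : Fin p),
      c ⬝ᵥ (V *ᵥ Pi.single l 1) = (V *ᵥ c) l := by
    intro c l
    rw [Matrix.mulVec_single_one]
    simp only [dotProduct, Matrix.mulVec, mul_one, Matrix.col_apply]
    exact Finset.sum_congr rfl fun k _ => by rw [hVs l k]; ring
  have sym_dot : ∀ c e : Fin p → ℝ, c ⬝ᵥ (V *ᵥ e) = e ⬝ᵥ (V *ᵥ c) := by
    intro c e
    simp only [dotProduct, Matrix.mulVec, Finset.mul_sum]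
    rw [Finset.sum_comm]
    exact Finset.sum_congr rfl fun l _ => Finset.sum_congr rfl fun k _ => by
      rw [hVs k l]; ring
  have hTY : ∀ l ω, Ym μ X l ω = ∑ k, (Pi.single l 1 : Fin p → ℝ) k * Ym μ X k ω := by
    intro l ω
    simp [Pi.single_apply, ite_mul]
  refine ⟨⟨?_, ?_⟩, ?_⟩
  · -- ACI → K i j = 0
    intro hACI
    set c : Fin p → ℝ := fun l => K j j * K l i - K j i * K l j with hcdef
    set d : Fin p → ℝ := fun l => K i i * K l j - K i j * K l i with hddef
    have hcvec : c = K *ᵥ (Pi.single i (K j j) - Pi.single j (K j i)) := by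
      funext l
      simp only [hcdef, Matrix.mulVec_sub, Matrix.mulVec_single, Pi.sub_apply, Pi.smul_apply, op_smul_eq_mul, Matrix.col_apply]
      ring
    have hdvec : d = K *ᵥ (Pi.single j (K i i) - Pi.single i (K i j)) := by
      funext l
      simp only [hddef, Matrix.mulVec_sub, Matrix.mulVec_single, Pi.sub_apply, Pi.smul_apply, op_smul_eq_mul, Matrix.col_apply]
      ring
    have hVc : V *ᵥ c = Pi.single i (K j j) - Pi.single j (K j i) := by
      rw [hcvec, Matrix.mulVec_mulVec, hVK, Matrix.one_mulVec]
    have hVd : V *ᵥ d = Pi.single j (K i i) - Pi.single i (K i j) := by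
      rw [hdvec, Matrix.mulVec_mulVec, hVK, Matrix.one_mulVec]
    have hcj : c j = 0 := by simp only [hcdef]; ring
    have hdi : d i = 0 := by simp only [hddef]; ring
    have hfmem : (fun ω => ∑ k, c k * Ym μ X k ω) ∈
        addSpace μ X (({i} : Set (Fin p)) ∪ ({i, j}ᶜ : Set (Fin p))) :=
      (mem_addSpace_iff μ X hmeas hval ha _ _).mpr
        ⟨c, fun k hk => by rw [(hmemA k).mp hk]; exact hcj, rfl⟩
    have hgmem : (fun ω => ∑ k, d k * Ym μ X k ω) ∈
        addSpace μ X (({j} : Set (Fin p)) ∪ ({i, j}ᶜ : Set (Fin p))) :=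
      (mem_addSpace_iff μ X hmeas hval ha _ _).mpr
        ⟨d, fun k hk => by rw [(hmemB k).mp hk]; exact hdi, rfl⟩
    have hforth : ∀ h ∈ addSpace μ X ({i, j}ᶜ : Set (Fin p)),
        expec μ (fun ω => (∑ k, c k * Ym μ X k ω) * h ω) = 0 := by
      intro h hh
      obtain ⟨e, he, rfl⟩ := (mem_addSpace_iff μ X hmeas hval ha _ _).mp hh
      rw [key c e, sym_dot c e, hVc]
      have hei : e i = 0 := he i (by simp)
      have hej : e j = 0 := he j (by simp)
      simp [dotProduct_sub, dotProduct_single, hei, hej]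
    have hgorth : ∀ h ∈ addSpace μ X ({i, j}ᶜ : Set (Fin p)),
        expec μ (fun ω => (∑ k, d k * Ym μ X k ω) * h ω) = 0 := by
      intro h hh
      obtain ⟨e, he, rfl⟩ := (mem_addSpace_iff μ X hmeas hval ha _ _).mp hh
      rw [key d e, sym_dot d e, hVd]
      have hei : e i = 0 := he i (by simp)
      have hej : e j = 0 := he j (by simp)
      simp [dotProduct_sub, dotProduct_single, hei, hej]
    have h0 := hACI _ hfmem hforth _ hgmem hgorth
    rw [key c d, hVd] at h0
    have h1 : c j * K i i - c i * K i j = 0 := by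
      simpa [dotProduct_sub, dotProduct_single] using h0
    rw [hcj] at h1
    have hci : c i = K j j * K i i - K j i * K i j := rfl
    have h2 : K i j * (K i i * K j j - K i j * K j i) = 0 := by
      rw [hci] at h1
      rw [hKs j i] at h1 ⊢
      nlinarith [h1]
    rcases mul_eq_zero.mp h2 with h3 | h3
    · exact h3
    · exact absurd h3 hminor.ne'
  · -- K i j = 0 → ACI
    intro hKij0
    intro f hf hforth g hg hgorth
    obtain ⟨c, hc, rfl⟩ := (mem_addSpace_iff μ X hmeas hval ha _ _).mp hf
    obtain ⟨d, hd, rfl⟩ := (mem_addSpace_iff μ X hmeas hval ha _ _).mp hg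
    have hcj : c j = 0 := hc j ((hmemA j).mpr rfl)
    have hdi : d i = 0 := hd i ((hmemB i).mpr rfl)
    have hccond : ∀ l, l ≠ i → l ≠ j → (V *ᵥ c) l = 0 := by
      intro l hli hlj
      have hYmem : Ym μ X l ∈ addSpace μ X ({i, j}ᶜ : Set (Fin p)) :=
        Submodule.subset_span ⟨l, by simp [hli, hlj],
          fun x => x - expec μ (fun ω => X ω l), expec_Y μ X hmeas hval l, rfl⟩
      have h := hforth _ hYmem
      have heq : (fun ω => (fun ω => ∑ k, c k * Ym μ X k ω) ω * Ym μ X l ω) =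
          fun ω => (∑ k, c k * Ym μ X k ω) * (∑ k, (Pi.single l 1 : Fin p → ℝ) k * Ym μ X k ω) := by
        funext ω
        rw [← hTY l ω]
      rw [heq, key c _, orth_entry c l] at h
      exact h
    have hdcond : ∀ l, l ≠ i → l ≠ j → (V *ᵥ d) l = 0 := by
      intro l hli hlj
      have hYmem : Ym μ X l ∈ addSpace μ X ({i, j}ᶜ : Set (Fin p)) :=
        Submodule.subset_span ⟨l, by simp [hli, hlj],
          fun x => x - expec μ (fun ω => X ω l), expec_Y μ X hmeas hval l, rfl⟩
      have h := hgorth _ hYmem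
      have heq : (fun ω => (fun ω => ∑ k, d k * Ym μ X k ω) ω * Ym μ X l ω) =
          fun ω => (∑ k, d k * Ym μ X k ω) * (∑ k, (Pi.single l 1 : Fin p → ℝ) k * Ym μ X k ω) := by
        funext ω
        rw [← hTY l ω]
      rw [heq, key d _, orth_entry d l] at h
      exact h
    have hbeta : (fun ω => (fun ω => ∑ k, c k * Ym μ X k ω) ω *
        (fun ω => ∑ k, d k * Ym μ X k ω) ω) =
        fun ω => (∑ k, c k * Ym μ X k ω) * (∑ k, d k * Ym μ X k ω) := rfl
    rw [hbeta, key c d]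
    set u := V *ᵥ d with hudef
    have hui : u i = 0 := by
      have hdK : d = K *ᵥ u := by
        rw [hudef, Matrix.mulVec_mulVec, hKV, Matrix.one_mulVec]
      have hdieq : d i = ∑ m, K i m * u m := by
        rw [hdK]; rfl
      have hsum : ∑ m, K i m * u m = K i i * u i := by
        refine Finset.sum_eq_single_of_mem i (Finset.mem_univ i) fun m _ hmi => ?_
        by_cases hmj : m = j
        · subst hmj; rw [hKij0, zero_mul]
        · rw [hdcond m hmi hmj, mul_zero]
      rw [hdi, hsum] at hdieq
      exact (mul_eq_zero.mp hdieq.symm).resolve_left hKii.ne'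
    show c ⬝ᵥ u = 0
    apply Finset.sum_eq_zero
    intro l _
    by_cases hli : l = i
    · subst hli; rw [hui, mul_zero]
    by_cases hlj : l = j
    · subst hlj; rw [hcj, zero_mul]
    · rw [hdcond l hli hlj, mul_zero]
  · -- V⁻¹ i j = 0 ↔ C⁻¹ i j = 0
    have hVdd : ∀ k, 0 < V k k := fun k => diag_pos hPD k
    have hsq : ∀ k, Real.sqrt (V k k) ≠ 0 := fun k => (Real.sqrt_pos.mpr (hVdd k)).ne'
    set D := Matrix.diagonal (fun k => (Real.sqrt (V k k))⁻¹) with hDdef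
    have hCD : C = D * V * D := by
      ext k l
      rw [Matrix.mul_diagonal, Matrix.diagonal_mul, hC k l, ← hV k k, ← hV l l, ← hV k l]
      field_simp
    have hDinv : D⁻¹ = Matrix.diagonal (fun k => Real.sqrt (V k k)) := by
      refine Matrix.inv_eq_left_inv ?_
      rw [hDdef, Matrix.diagonal_mul_diagonal]
      have h1 : (fun k => Real.sqrt (V k k) * (Real.sqrt (V k k))⁻¹) = fun _ => (1:ℝ) := by
        funext k; exact mul_inv_cancel₀ (hsq k)
      rw [h1, Matrix.diagonal_one]
    have hCinv : C⁻¹ = D⁻¹ * (V⁻¹ * D⁻¹) := by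
      rw [hCD, Matrix.mul_inv_rev, Matrix.mul_inv_rev]
    have hentry : C⁻¹ i j = Real.sqrt (V i i) * (K i j * Real.sqrt (V j j)) := by
      rw [hCinv, hDinv, Matrix.diagonal_mul, Matrix.mul_diagonal]
    constructor
    · intro h; rw [hentry, h]; ring
    · intro h
      rw [hentry] at h
      rcases mul_eq_zero.mp h with h1 | h1
      · exact absurd h1 (hsq i)
      rcases mul_eq_zero.mp h1 with h2 | h2
      · exact h2
      · exact absurd h2 (hsq j)
end
end
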